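/- arXiv:1102.4862 — 2 statements merged into one kernel-verified Lean document; each statement's English description precedes it below -/
import Mathlib

section
/- Let P be a neighbourly 2m-polytope (m > 1) with at least 2m+3 vertices, let U be a universal k-face of P, and let V be an n-face of P with U ⊆ V and 0 ≤ k < n ≤ 2m−1. Then V is a universal n-face of P if and only if V/U is a universal (n−k−1)-face of the quotient polytope P/U. -/
open Set

noncomputable section

/-- `Euc N` is the Euclidean space `ℝ^N`. -/
abbrev Euc (N : ℕ) : Type := EuclideanSpace ℝ (Fin N)

/-- A polytope is the convex hull of a finite point set. -/
def IsPolytope {N : ℕ} (P : Set (Euc N)) : Prop :=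
  ∃ V : Set (Euc N), V.Finite ∧ P = convexHull ℝ V

-- The dimension of a set: the dimension of its affine hull (with `pdim ∅ = -1`).
open Classical in
def pdim {N : ℕ} (A : Set (Euc N)) : ℤ :=
  if A = ∅ then -1 else (Module.finrank ℝ (affineSpan ℝ A).direction : ℤ)

/-- The vertex set of a polytope: its extreme points. -/
def verts {N : ℕ} (P : Set (Euc N)) : Set (Euc N) :=
  P.extremePoints ℝ

/-- A proper face of `P`: the intersection of `P` with a supporting hyperplane. -/
def IsProperFace {N : ℕ} (P F : Set (Euc N)) : Prop :=
  ∃ (l : Euc N →ₗ[ℝ] ℝ) (c : ℝ), l ≠ 0 ∧ (∀ x ∈ P, l x ≤ c) ∧ (∃ x ∈ P, l x = c) ∧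
    F = {x | x ∈ P ∧ l x = c}

/-- A face of `P`, where the improper faces `∅` and `P` itself are also counted as faces. -/
def IsFaceOf {N : ℕ} (P F : Set (Euc N)) : Prop :=
  F = ∅ ∨ F = P ∨ IsProperFace P F

/-- Membership in the boundary complex `𝓑(P)` (all proper faces together with `∅`). -/
def MemBoundary {N : ℕ} (P F : Set (Euc N)) : Prop :=
  F = ∅ ∨ IsProperFace P F

/-- `F` is a `k`-dimensional (proper) face of `P`. -/
def IsFaceOfDim {N : ℕ} (P F : Set (Euc N)) (k : ℤ) : Prop :=
  IsProperFace P F ∧ pdim F = k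

/-- A facet of a `d`-polytope `P` is a `(d-1)`-face. -/
def IsFacet {N : ℕ} (d : ℕ) (P F : Set (Euc N)) : Prop :=
  IsFaceOfDim P F ((d : ℤ) - 1)

/-- `P` is `k`-neighbourly: every `k` of its vertices form the vertex set of a proper face. -/
def IsKNeighbourly {N : ℕ} (P : Set (Euc N)) (k : ℕ) : Prop :=
  ∀ S ⊆ verts P, S.ncard = k → ∃ F, IsProperFace P F ∧ verts F = S

/-- `P` is a neighbourly `d`-polytope: a `d`-dimensional `⌊d/2⌋`-neighbourly polytope. -/
def IsNeighbourly {N : ℕ} (d : ℕ) (P : Set (Euc N)) : Prop :=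
  IsPolytope P ∧ pdim P = (d : ℤ) ∧ IsKNeighbourly P (d / 2)

/-- `U` is a universal `k`-face of the `d`-polytope `P`:
`conv (S ∪ U)` is a face of `P` for every `S ⊆ 𝒱(P)` with `|S| ≤ ⌊(d-k-1)/2⌋`. -/
def IsUniversalFace {N : ℕ} (d : ℕ) (P U : Set (Euc N)) (k : ℕ) : Prop :=
  IsFaceOfDim P U (k : ℤ) ∧
  ∀ S ⊆ verts P, S.ncard ≤ (d - k - 1) / 2 →
    IsProperFace P (convexHull ℝ (S ∪ U))

/-- `z` is beyond the facet `F` of `P`: the supporting hyperplane of `F` separates `z` from `P`. -/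
def Beyond {N : ℕ} (P F : Set (Euc N)) (z : Euc N) : Prop :=
  ∃ (l : Euc N →ₗ[ℝ] ℝ) (c : ℝ), l ≠ 0 ∧ (∀ x ∈ P, l x ≤ c) ∧
    F = {x | x ∈ P ∧ l x = c} ∧ c < l z

/-- `z` is beneath the facet `F` of `P`: `z` lies on the same open side of `aff F` as `P`. -/
def Beneath {N : ℕ} (P F : Set (Euc N)) (z : Euc N) : Prop :=
  ∃ (l : Euc N →ₗ[ℝ] ℝ) (c : ℝ), l ≠ 0 ∧ (∀ x ∈ P, l x ≤ c) ∧
    F = {x | x ∈ P ∧ l x = c} ∧ l z < c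

/-- `Phi x y j = Φ_j = conv {x_1, y_1, …, x_j, y_j}` (1-indexed; `Phi x y 0 = ∅`). -/
def Phi {N m : ℕ} (x y : Fin m → Euc N) (j : ℕ) : Set (Euc N) :=
  convexHull ℝ {p | ∃ i : Fin m, (i : ℕ) < j ∧ (p = x i ∨ p = y i)}

/-- `𝒯 = {Φ_1, …, Φ_m}` is a universal tower in `P`: the `x_i, y_i` are distinct vertices of `P`
and `Φ_j` is a universal `(2j-1)`-face of `P` for `1 ≤ j ≤ m`. -/
def IsUniversalTower {N : ℕ} (m : ℕ) (P : Set (Euc N)) (x y : Fin m → Euc N) : Prop :=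
  Function.Injective (Sum.elim x y) ∧
  (∀ i, x i ∈ verts P) ∧ (∀ i, y i ∈ verts P) ∧
  ∀ j, 1 ≤ j → j ≤ m → IsUniversalFace (2 * m) P (Phi x y j) (2 * j - 1)

/-- `F ∈ 𝒞(𝒯) = (𝓕_1∖𝓕_2) ∪ (𝓕_3∖𝓕_4) ∪ ⋯` where `𝓕_i` is the set of facets containing `Φ_i`
(with `𝓕_j = ∅` for `j > m`). -/
def InSewC {N : ℕ} (m : ℕ) (x y : Fin m → Euc N) (F : Set (Euc N)) : Prop :=
  ∃ i, Odd i ∧ 1 ≤ i ∧ i ≤ m ∧ Phi x y i ⊆ F ∧ (i = m ∨ ¬ Phi x y (i + 1) ⊆ F)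

/-- `z` lies exactly beyond `𝒞(𝒯)`: `z` is beyond every facet of `P` in `𝒞(𝒯)` and beneath
every facet of `P` not in `𝒞(𝒯)`. -/
def ExactlyBeyond {N : ℕ} (m : ℕ) (P : Set (Euc N)) (x y : Fin m → Euc N) (z : Euc N) : Prop :=
  ∀ F, IsFacet (2 * m) P F →
    (InSewC m x y F → Beyond P F z) ∧ (¬ InSewC m x y F → Beneath P F z)

/-- `Q` is a quotient polytope `P/G` of `P` by its face `G`, with vertex correspondence `φ`:
the face lattice of `Q` is isomorphic to the interval `{F : G ⊆ F ⊆ P}` of the face lattice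
of `P`, via vertex sets. -/
def IsQuotient {N M : ℕ} (P G : Set (Euc N)) (Q : Set (Euc M)) (φ : Euc N → Euc M) : Prop :=
  IsPolytope Q ∧ Set.BijOn φ (verts P \ verts G) (verts Q) ∧
  ∀ W ⊆ verts P \ verts G,
    ((∃ F, IsFaceOf P F ∧ G ⊆ F ∧ verts F = W ∪ verts G) ↔
     (∃ F', IsFaceOf Q F' ∧ verts F' = φ '' W))

/-- `P` and `Q` are combinatorially equivalent via the vertex bijection `ψ`:
`ψ` maps vertex sets of faces onto vertex sets of faces in both directions. -/
def CombEquiv {N M : ℕ} (P : Set (Euc N)) (Q : Set (Euc M)) (ψ : Euc N → Euc M) : Prop :=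
  Set.BijOn ψ (verts P) (verts Q) ∧
  ∀ W ⊆ verts P,
    ((∃ F, IsFaceOf P F ∧ verts F = W) ↔ (∃ F', IsFaceOf Q F' ∧ verts F' = ψ '' W))

/-- `A` is a missing face of `P` relative to the face `G`;
`IsMissingFaceRel P G` describes `ℳ(P/G)`. -/
def IsMissingFaceRel {N : ℕ} (P G A : Set (Euc N)) : Prop :=
  A ⊆ verts P \ verts G ∧
  ¬ MemBoundary P (convexHull ℝ (A ∪ G)) ∧
  ∀ A' ⊂ A, MemBoundary P (convexHull ℝ (A' ∪ G))

/-- `A ∈ ℳ(P)`, the set of missing faces of `P`. -/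
def IsMissingFace {N : ℕ} (P A : Set (Euc N)) : Prop :=
  IsMissingFaceRel P ∅ A

/-- The moment curve `t ↦ (t, t², …, t^d)` in `ℝ^d`. -/
def momentCurve (d : ℕ) (t : ℝ) : Euc d :=
  WithLp.toLp 2 (fun i => t ^ ((i : ℕ) + 1))

/-- `C` is a cyclic `d`-polytope with `n` vertices: the convex hull of `n` distinct points
on the moment curve in `ℝ^d`. -/
def IsCyclicPolytope (d n : ℕ) (C : Set (Euc d)) : Prop :=
  ∃ t : Fin n → ℝ, Function.Injective t ∧
    C = convexHull ℝ (Set.range fun i => momentCurve d (t i)) ∧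
    (verts C).ncard = n

namespace Aux

variable {N : ℕ}

lemma hull_le {A : Set (Euc N)} {l : Euc N →ₗ[ℝ] ℝ} {c : ℝ} (h : ∀ x ∈ A, l x ≤ c) :
    ∀ x ∈ convexHull ℝ A, l x ≤ c := fun _x hx =>
  convexHull_min h (convex_halfSpace_le ⟨l.map_add, l.map_smul⟩ c) hx

lemma hull_eq {A : Set (Euc N)} {l : Euc N →ₗ[ℝ] ℝ} {c : ℝ} (h : ∀ x ∈ A, l x = c) :
    ∀ x ∈ convexHull ℝ A, l x = c := fun _x hx =>
  convexHull_min h (convex_hyperplane ⟨l.map_add, l.map_smul⟩ c) hx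

lemma exists_eq_of_mem_hull {Z : Set (Euc N)} {l : Euc N →ₗ[ℝ] ℝ} {c : ℝ} {p : Euc N}
    (hZ : ∀ z ∈ Z, l z ≤ c) (hp : p ∈ convexHull ℝ Z) (hpc : l p = c) :
    ∃ z ∈ Z, l z = c := by
  by_contra h
  push_neg at h
  have hlt : ∀ z ∈ Z, l z < c := fun z hz => lt_of_le_of_ne (hZ z hz) (h z hz)
  have hsub : convexHull ℝ Z ⊆ {x | l x < c} :=
    convexHull_min hlt (convex_halfSpace_lt ⟨l.map_add, l.map_smul⟩ c)
  exact absurd hpc (ne_of_lt (hsub hp))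

lemma verts_subset {P : Set (Euc N)} : verts P ⊆ P := extremePoints_subset

lemma verts_empty : verts (∅ : Set (Euc N)) = ∅ := extremePoints_empty

lemma mem_verts_of_subset {A P : Set (Euc N)} (hAP : A ⊆ P) {x : Euc N}
    (hxA : x ∈ A) (hx : x ∈ verts P) : x ∈ verts A :=
  inter_extremePoints_subset_extremePoints_of_subset hAP ⟨hxA, hx⟩

lemma properFace_subset {P F : Set (Euc N)} (hF : IsProperFace P F) : F ⊆ P := by
  obtain ⟨l, c, -, -, -, rfl⟩ := hF; exact fun x hx => hx.1

lemma properFace_nonempty {P F : Set (Euc N)} (hF : IsProperFace P F) : F.Nonempty := by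
  obtain ⟨l, c, -, -, ⟨x, hx, hxc⟩, rfl⟩ := hF; exact ⟨x, hx, hxc⟩

lemma properFace_convex {P F : Set (Euc N)} (hP : Convex ℝ P) (hF : IsProperFace P F) :
    Convex ℝ F := by
  obtain ⟨l, c, -, -, -, rfl⟩ := hF
  exact hP.inter (convex_hyperplane ⟨l.map_add, l.map_smul⟩ c)

lemma verts_properFace {P F : Set (Euc N)} (hF : IsProperFace P F) :
    verts F = verts P ∩ F := by
  obtain ⟨l, c, hl0, hlc, hex, rfl⟩ := hF
  apply subset_antisymm
  · rintro x ⟨⟨hxP, hxc⟩, hxext⟩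
    refine ⟨⟨hxP, ?_⟩, ⟨hxP, hxc⟩⟩
    rintro x₁ hx₁ x₂ hx₂ hseg
    obtain ⟨a, b, ha, hb, hab, habx⟩ := hseg
    have e : a * l x₁ + b * l x₂ = c := by
      rw [← hxc, ← habx]; simp [map_add, map_smul]
    have hac : a * c + b * c = c := by rw [← add_mul, hab, one_mul]
    have h1 : l x₁ = c := by
      by_contra h
      have h1' : l x₁ < c := lt_of_le_of_ne (hlc x₁ hx₁) h
      linarith [mul_lt_mul_of_pos_left h1' ha, mul_le_mul_of_nonneg_left (hlc x₂ hx₂) hb.le]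
    have h2 : l x₂ = c := by
      by_contra h
      have h2' : l x₂ < c := lt_of_le_of_ne (hlc x₂ hx₂) h
      linarith [mul_lt_mul_of_pos_left h2' hb, mul_le_mul_of_nonneg_left (hlc x₁ hx₁) ha.le]
    exact hxext ⟨hx₁, h1⟩ ⟨hx₂, h2⟩ ⟨a, b, ha, hb, hab, habx⟩
  · rintro x ⟨hxv, hxF⟩
    exact Aux.mem_verts_of_subset (fun y hy => hy.1) hxF hxv

/-- A bundle of niceness facts for a polytope-like set. -/
def Tame (P : Set (Euc N)) : Prop :=
  IsCompact P ∧ Convex ℝ P ∧ (verts P).Finite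

lemma tame_of_isPolytope {P : Set (Euc N)} (hP : IsPolytope P) : Tame P := by
  obtain ⟨A, hA, rfl⟩ := hP
  exact ⟨hA.isCompact_convexHull ℝ, convex_convexHull ℝ A,
    hA.subset extremePoints_convexHull_subset⟩

lemma Tame.conv_verts {P : Set (Euc N)} (hT : Tame P) : convexHull ℝ (verts P) = P := by
  obtain ⟨hc, hconv, hfin⟩ := hT
  have h1 := closure_convexHull_extremePoints hc hconv
  rwa [show P.extremePoints ℝ = verts P from rfl,
    IsClosed.closure_eq (hfin.isClosed_convexHull ℝ)] at h1

lemma Tame.face_compact {P F : Set (Euc N)} (hT : Tame P) (hF : IsProperFace P F) :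
    IsCompact F := by
  obtain ⟨l, c, -, -, -, rfl⟩ := hF
  have hcl : IsClosed {x : Euc N | l x = c} :=
    isClosed_eq l.continuous_of_finiteDimensional continuous_const
  exact hT.1.inter_right hcl

lemma Tame.face_tame {P F : Set (Euc N)} (hT : Tame P) (hF : IsProperFace P F) : Tame F :=
  ⟨hT.face_compact hF, properFace_convex hT.2.1 hF,
    hT.2.2.subset (by rw [verts_properFace hF]; exact inter_subset_left)⟩

lemma Tame.face_conv_verts {P F : Set (Euc N)} (hT : Tame P) (hF : IsProperFace P F) :
    convexHull ℝ (verts F) = F := (hT.face_tame hF).conv_verts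

lemma Tame.face_verts_nonempty {P F : Set (Euc N)} (hT : Tame P) (hF : IsProperFace P F) :
    (verts F).Nonempty := by
  by_contra h
  rw [not_nonempty_iff_eq_empty] at h
  have := hT.face_conv_verts hF
  rw [h, convexHull_empty] at this
  exact (properFace_nonempty hF).ne_empty this.symm

lemma verts_face_subset {P F : Set (Euc N)} (hF : IsProperFace P F) : verts F ⊆ verts P := by
  rw [verts_properFace hF]; exact inter_subset_left

lemma conv_subset_of_subset {A P : Set (Euc N)} (hconv : Convex ℝ P) (h : A ⊆ P) :
    convexHull ℝ A ⊆ P := convexHull_min h hconv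

/-- The extreme points of the hull of a set of vertices are exactly that set. -/
lemma verts_hull_union {P : Set (Euc N)} (hT : Tame P) {A : Set (Euc N)} (hA : A ⊆ verts P) :
    verts (convexHull ℝ A) = A := by
  apply subset_antisymm extremePoints_convexHull_subset
  intro x hx
  exact mem_verts_of_subset (conv_subset_of_subset hT.2.1 (hA.trans verts_subset))
    (subset_convexHull ℝ A hx) (hA hx)

/-- Transitivity: an exposed subface of a proper face is a proper face. -/
lemma face_trans {P F : Set (Euc N)} (hT : Tame P) (hF : IsProperFace P F)
    {l' : Euc N →ₗ[ℝ] ℝ} {c' : ℝ} (hl' : l' ≠ 0)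
    (hbd : ∀ x ∈ F, l' x ≤ c') (hne : ({x | x ∈ F ∧ l' x = c'} : Set (Euc N)).Nonempty) :
    IsProperFace P {x | x ∈ F ∧ l' x = c'} := by
  obtain ⟨l, c, hl0, hlP, hex, hFeq⟩ := hF
  have hFsub : F ⊆ P := by rw [hFeq]; exact fun x hx => hx.1
  have hstrict : ∀ a ∈ verts P \ F, l a < c := by
    rintro a ⟨haP, haF⟩
    refine lt_of_le_of_ne (hlP a (verts_subset haP)) fun h => haF ?_
    rw [hFeq]; exact ⟨verts_subset haP, h⟩
  -- choose a good ε
  have hkey : ∃ ε : ℝ, 0 < ε ∧ (l + ε • l') ≠ 0 ∧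
      ∀ a ∈ verts P \ F, l a + ε * l' a < c + ε * c' := by
    classical
    have hfin : (verts P \ F).Finite := hT.2.2.diff
    set g : Euc N → ℝ := fun a => (c - l a) / (max (l' a - c') 0 + 1) with hg
    set s : Finset ℝ := insert 1 (hfin.toFinset.image g) with hs
    have hself : ∀ r ∈ s, 0 < r := by
      intro r hr
      rw [hs, Finset.mem_insert] at hr
      rcases hr with rfl | hr
      · norm_num
      · obtain ⟨a, ha, rfl⟩ := Finset.mem_image.mp hr
        rw [Set.Finite.mem_toFinset] at ha
        have h1 : 0 < c - l a := by have := hstrict a ha; linarith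
        have h2 : 0 < max (l' a - c') 0 + 1 := by positivity
        exact div_pos h1 h2
    set ε₀ : ℝ := s.min' ⟨1, Finset.mem_insert_self 1 _⟩ with hε₀
    have hε₀pos : 0 < ε₀ := hself _ (s.min'_mem _)
    have hgood : ∀ ε : ℝ, 0 < ε → ε ≤ ε₀ → ∀ a ∈ verts P \ F,
        l a + ε * l' a < c + ε * c' := by
      intro ε hεpos hεle a ha
      have hga : ε ≤ g a := le_trans hεle (s.min'_le _ (by
        rw [hs, Finset.mem_insert]
        exact Or.inr (Finset.mem_image_of_mem g (Set.Finite.mem_toFinset hfin |>.mpr ha))))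
      have h1 : 0 < c - l a := by have := hstrict a ha; linarith
      have hM : l' a - c' ≤ max (l' a - c') 0 := le_max_left _ _
      have hM0 : 0 ≤ max (l' a - c') 0 := le_max_right _ _
      have hga' : g a * (max (l' a - c') 0 + 1) = c - l a := by
        rw [hg]; field_simp
      have : ε * (l' a - c') < c - l a := by
        calc ε * (l' a - c') ≤ ε * max (l' a - c') 0 :=
              mul_le_mul_of_nonneg_left hM hεpos.le
          _ ≤ g a * max (l' a - c') 0 := mul_le_mul_of_nonneg_right hga hM0
          _ < g a * (max (l' a - c') 0 + 1) := by
              have hgapos : 0 < g a := lt_of_lt_of_le hεpos hga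
              nlinarith
          _ = c - l a := hga'
      nlinarith
    by_cases hcase : (l + ε₀ • l') ≠ 0
    · exact ⟨ε₀, hε₀pos, hcase, hgood ε₀ hε₀pos le_rfl⟩
    · push_neg at hcase
      refine ⟨ε₀ / 2, by positivity, ?_, hgood (ε₀/2) (by positivity) (by linarith)⟩
      intro h0
      have hz : (ε₀ - ε₀ / 2) • l' = 0 := by
        have heq2 : l + ε₀ • l' = l + (ε₀ / 2) • l' := hcase.trans h0.symm
        have : ε₀ • l' = (ε₀ / 2) • l' := by
          have := congrArg (fun z => z - l) heq2
          simpa [add_sub_cancel_left] using this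
        exact (sub_smul ε₀ (ε₀ / 2) l').trans (by rw [this, sub_self])
      have h2 : l' = 0 := by
        have hne0 : (ε₀ - ε₀ / 2) ≠ 0 := by intro hh; rw [sub_eq_zero] at hh; linarith
        exact (smul_eq_zero.mp hz).resolve_left hne0
      exact hl' h2
  obtain ⟨ε, hεpos, hεne, hεlt⟩ := hkey
  have happ : ∀ x, (l + ε • l') x = l x + ε * l' x := by
    intro x; simp [LinearMap.add_apply, LinearMap.smul_apply, smul_eq_mul]
  set cε : ℝ := c + ε * c' with hcε
  have hbdP : ∀ x ∈ P, (l + ε • l') x ≤ cε := by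
    rw [← hT.conv_verts]
    refine hull_le ?_
    intro a ha
    rw [happ]
    by_cases haF : a ∈ F
    · have h1 : l a = c := by rw [hFeq] at haF; exact haF.2
      have h2 : l' a ≤ c' := hbd a haF
      rw [h1, hcε]; nlinarith
    · exact le_of_lt (hεlt a ⟨ha, haF⟩)
  obtain ⟨x₀, hx₀F, hx₀c⟩ := hne
  have hx₀P : x₀ ∈ P := hFsub hx₀F
  have hattain : (l + ε • l') x₀ = cε := by
    rw [happ, hcε, hx₀c]
    have : l x₀ = c := by rw [hFeq] at hx₀F; exact hx₀F.2
    rw [this]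
  have hface2 : IsProperFace P {x | x ∈ P ∧ (l + ε • l') x = cε} :=
    ⟨l + ε • l', cε, hεne, hbdP, ⟨x₀, hx₀P, hattain⟩, rfl⟩
  have hGconv : Convex ℝ {x | x ∈ F ∧ l' x = c'} := by
    have hFconv : Convex ℝ F := by
      rw [hFeq]; exact hT.2.1.inter (convex_hyperplane ⟨l.map_add, l.map_smul⟩ c)
    exact hFconv.inter (convex_hyperplane ⟨l'.map_add, l'.map_smul⟩ c')
  have heq : {x | x ∈ P ∧ (l + ε • l') x = cε} = {x | x ∈ F ∧ l' x = c'} := by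
    apply subset_antisymm
    · have h1 : verts {x | x ∈ P ∧ (l + ε • l') x = cε} ⊆ {x | x ∈ F ∧ l' x = c'} := by
        intro a ha
        have haP : a ∈ verts P := verts_face_subset hface2 ha
        have haG2 : a ∈ {x | x ∈ P ∧ (l + ε • l') x = cε} := verts_subset ha
        have haF : a ∈ F := by
          by_contra haF
          exact absurd haG2.2 (by rw [happ]; exact ne_of_lt (hεlt a ⟨haP, haF⟩))
        have hlac : l a = c := by rw [hFeq] at haF; exact haF.2
        have : l' a = c' := by
          have := haG2.2
          rw [happ, hlac, hcε] at this
          have h2 : ε * l' a = ε * c' := by linarith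
          exact mul_left_cancel₀ (ne_of_gt hεpos) h2
        exact ⟨haF, this⟩
      calc {x | x ∈ P ∧ (l + ε • l') x = cε}
          = convexHull ℝ (verts {x | x ∈ P ∧ (l + ε • l') x = cε}) :=
            (hT.face_conv_verts hface2).symm
        _ ⊆ convexHull ℝ {x | x ∈ F ∧ l' x = c'} := convexHull_mono h1
        _ = {x | x ∈ F ∧ l' x = c'} := hGconv.convexHull_eq
    · rintro x ⟨hxF, hxc⟩
      refine ⟨hFsub hxF, ?_⟩
      rw [happ, hxc]
      have : l x = c := by rw [hFeq] at hxF; exact hxF.2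
      rw [this]
  rw [← heq]
  exact hface2

/-- For an affinely independent set `S` and a proper nonempty subset `B`, there is a linear
functional equal to a constant on `B` and strictly below it on `S \ B`. -/
lemma simplex_subface {S B : Set (Euc N)} (hS : AffineIndependent ℝ ((↑) : S → Euc N))
    (hBS : B ⊆ S) (hB : B.Nonempty) (hSB : (S \ B).Nonempty) :
    ∃ (l' : Euc N →ₗ[ℝ] ℝ) (c' : ℝ), l' ≠ 0 ∧ (∀ x ∈ B, l' x = c') ∧
      ∀ x ∈ S \ B, l' x = c' - 1 := by
  classical
  obtain ⟨t, hSt, hti, htt⟩ := exists_subset_affineIndependent_affineSpan_eq_top hS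
  have htfin : t.Finite := finite_set_of_fin_dim_affineIndependent ℝ hti
  haveI : Fintype ↥t := htfin.fintype
  set b : AffineBasis ↥t ℝ (Euc N) := ⟨(↑), hti, by rwa [Subtype.range_coe]⟩ with hbdef
  have hcoordne : ∀ (i j : ↥t), i ≠ j → (b.coord i) (j : Euc N) = 0 :=
    fun i j hne => b.coord_apply_ne hne
  have hcoordeq : ∀ (i : ↥t), (b.coord i) (i : Euc N) = 1 :=
    fun i => b.coord_apply_eq i
  set tB : Finset ↥t := Finset.univ.filter (fun i => (i : Euc N) ∈ B) with htBdef
  have htBmem : ∀ i : ↥t, i ∈ tB ↔ (i : Euc N) ∈ B := by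
    intro i; rw [htBdef, Finset.mem_filter]; simp
  set l' : Euc N →ₗ[ℝ] ℝ := ∑ i ∈ tB, (b.coord i).linear with hl'def
  set c₀ : ℝ := ∑ i ∈ tB, (b.coord i) 0 with hc₀def
  have hlin : ∀ x : Euc N, l' x = (∑ i ∈ tB, (b.coord i) x) - c₀ := by
    intro x
    rw [hl'def, hc₀def, LinearMap.coe_sum, Finset.sum_apply, ← Finset.sum_sub_distrib]
    refine Finset.sum_congr rfl fun i _ => ?_
    have := AffineMap.decomp (b.coord i)
    have h2 : (b.coord i) x = (b.coord i).linear x + (b.coord i) 0 := by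
      rw [this]; simp
    linarith
  have hsum1 : ∀ x ∈ B, (∑ i ∈ tB, (b.coord i) x) = 1 := by
    intro x hxB
    have hx : x ∈ t := hSt (hBS hxB)
    have hmem : (⟨x, hx⟩ : ↥t) ∈ tB := (htBmem ⟨x, hx⟩).mpr hxB
    have e1 : ∑ i ∈ tB, (b.coord i) x = (b.coord (⟨x, hx⟩ : ↥t)) x :=
      Finset.sum_eq_single_of_mem (f := fun i => (b.coord i) x) ⟨x, hx⟩
        hmem (fun i _ hne => hcoordne i ⟨x, hx⟩ hne)
    rw [e1]
    exact hcoordeq ⟨x, hx⟩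
  have hsum0 : ∀ x, x ∈ t → x ∉ B → (∑ i ∈ tB, (b.coord i) x) = 0 := by
    intro x hx hxB
    refine Finset.sum_eq_zero fun i hi => ?_
    have hne : i ≠ (⟨x, hx⟩ : ↥t) := by
      intro hceq
      exact hxB (by rw [← Subtype.coe_mk x hx, ← hceq]; exact (htBmem i).mp hi)
    exact hcoordne i ⟨x, hx⟩ hne
  refine ⟨l', 1 - c₀, ?_, ?_, ?_⟩
  · -- l' ≠ 0
    obtain ⟨x₀, hx₀⟩ := hB
    obtain ⟨y₀, hy₀⟩ := hSB
    intro h0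
    have h1 : l' x₀ = 1 - c₀ := by
      rw [hlin, hsum1 x₀ hx₀]
    have h2 : l' y₀ = - c₀ := by
      rw [hlin, hsum0 y₀ (hSt hy₀.1) hy₀.2]; ring
    rw [h0] at h1 h2
    simp only [LinearMap.zero_apply] at h1 h2
    linarith
  · intro x hx
    rw [hlin, hsum1 x hx]
  · intro x hx
    rw [hlin, hsum0 x (hSt hx.1) hx.2]
    ring

lemma radon_sets {A : Set (Euc N)} (h : ¬ AffineIndependent ℝ ((↑) : A → Euc N)) :
    ∃ Z₁ Z₂ : Set (Euc N), Z₁ ⊆ A ∧ Z₂ ⊆ A ∧ Disjoint Z₁ Z₂ ∧ Z₁ ∪ Z₂ = A ∧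
      ∃ p, p ∈ convexHull ℝ Z₁ ∧ p ∈ convexHull ℝ Z₂ := by
  obtain ⟨I, p, hp1, hp2⟩ := Convex.radon_partition h
  refine ⟨(↑) '' I, (↑) '' Iᶜ, Subtype.coe_image_subset A I, Subtype.coe_image_subset A Iᶜ,
    ?_, ?_, p, hp1, hp2⟩
  · exact (Set.disjoint_image_iff Subtype.coe_injective).mpr disjoint_compl_right
  · rw [← image_union, union_compl_self, Subtype.coe_image_univ]

/-- The basic separation contradiction: a point in the hull of `Z₁ ⊆ F` and in the hull of a
vertex set `Z₂` disjoint from the vertices of the face `F` is impossible. -/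
lemma face_separation {P F Z₁ Z₂ : Set (Euc N)} (hT : Tame P)
    (hF : IsProperFace P F) (hZ₁F : Z₁ ⊆ F) (hZ₂ : Z₂ ⊆ verts P)
    (hdisj : verts F ∩ Z₂ = ∅) {p : Euc N}
    (hp1 : p ∈ convexHull ℝ Z₁) (hp2 : p ∈ convexHull ℝ Z₂) : False := by
  have hvF : verts F = verts P ∩ F := verts_properFace hF
  obtain ⟨l, c, hl0, hlP, hex, hFeq⟩ := hF
  have hlZ₁ : ∀ x ∈ Z₁, l x = c := fun x hx => by
    have := hZ₁F hx; rw [hFeq] at this; exact this.2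
  have hpc : l p = c := hull_eq hlZ₁ p hp1
  have hbZ₂ : ∀ z ∈ Z₂, l z ≤ c := fun z hz => hlP z (verts_subset (hZ₂ hz))
  obtain ⟨z, hzZ₂, hzc⟩ := exists_eq_of_mem_hull hbZ₂ hp2 hpc
  have hzF : z ∈ F := by rw [hFeq]; exact ⟨verts_subset (hZ₂ hzZ₂), hzc⟩
  have hzvF : z ∈ verts F := by rw [hvF]; exact ⟨hZ₂ hzZ₂, hzF⟩
  have : z ∈ verts F ∩ Z₂ := ⟨hzvF, hzZ₂⟩
  rw [hdisj] at this
  exact this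

/-- In an `m`-neighbourly polytope with at least `2m+3` vertices, any `m+1` vertices are
affinely independent. -/
lemma indep_of_card_le {m : ℕ} {P : Set (Euc N)} (hT : Tame P)
    (hKN : IsKNeighbourly P m) (hcard : 2 * m + 3 ≤ (verts P).ncard)
    {B : Set (Euc N)} (hB : B ⊆ verts P) (hsize : B.ncard ≤ m + 1) :
    AffineIndependent ℝ ((↑) : B → Euc N) := by
  by_contra h
  obtain ⟨Z₁, Z₂, h1, h2, hdisj, hunion, p, hp1, hp2⟩ := radon_sets h
  have hfinB : B.Finite := hT.2.2.subset hB
  have hfin1 : Z₁.Finite := hfinB.subset h1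
  have hfin2 : Z₂.Finite := hfinB.subset h2
  have hZ₁ne : Z₁.Nonempty := (convexHull_nonempty_iff (𝕜 := ℝ)).mp ⟨p, hp1⟩
  have hZ₂ne : Z₂.Nonempty := (convexHull_nonempty_iff (𝕜 := ℝ)).mp ⟨p, hp2⟩
  have hsizes : Z₁.ncard + Z₂.ncard = B.ncard := by
    rw [← ncard_union_eq hdisj hfin1 hfin2, hunion]
  have hZ₂pos : 0 < Z₂.ncard := (ncard_pos hfin2).mpr hZ₂ne
  have hZ₁m : Z₁.ncard ≤ m := by omega
  have hsub : Z₁ ⊆ verts P \ Z₂ :=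
    subset_diff.mpr ⟨(h1.trans hB), hdisj⟩
  have hbig : m ≤ (verts P \ Z₂).ncard := by
    rw [ncard_diff (h2.trans hB) hfin2]
    have : Z₂.ncard ≤ B.ncard := by omega
    have hBsize : B.ncard ≤ m + 1 := hsize
    omega
  obtain ⟨D, hZ₁D, hD, hDcard⟩ := Set.exists_subsuperset_card_eq hsub hZ₁m hbig
  obtain ⟨F, hFface, hFverts⟩ := hKN D (hD.trans diff_subset) hDcard
  have hZ₁F : Z₁ ⊆ F := hZ₁D.trans (hFverts ▸ verts_subset)
  have hdisjF : verts F ∩ Z₂ = ∅ := by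
    rw [hFverts]
    rw [eq_empty_iff_forall_notMem]
    rintro z ⟨hz1, hz2⟩
    exact ((hD hz1).2) hz2
  exact face_separation hT hFface hZ₁F (h2.trans hB) hdisjF hp1 hp2

/-- Subsets of the vertex set of a simplex face span proper faces with that exact vertex set. -/
lemma subface_of_indep {P F : Set (Euc N)} (hT : Tame P) (hF : IsProperFace P F)
    (hind : AffineIndependent ℝ ((↑) : verts F → Euc N))
    {C : Set (Euc N)} (hC : C ⊆ verts F) (hCne : C.Nonempty) :
    IsProperFace P (convexHull ℝ C) ∧ verts (convexHull ℝ C) = C := by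
  have hCP : convexHull ℝ C ⊆ P :=
    conv_subset_of_subset hT.2.1 ((hC.trans verts_subset).trans (properFace_subset hF))
  have hvertseq : verts (convexHull ℝ C) = C := by
    apply subset_antisymm extremePoints_convexHull_subset
    intro x hx
    exact mem_verts_of_subset hCP (subset_convexHull ℝ C hx)
      (verts_face_subset hF (hC hx))
  refine ⟨?_, hvertseq⟩
  by_cases hCF : C = verts F
  · rw [hCF, hT.face_conv_verts hF]; exact hF
  · have hSB : (verts F \ C).Nonempty := by
      rcases Set.exists_of_ssubset (ssubset_of_subset_of_ne hC hCF) with ⟨x, hx1, hx2⟩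
      exact ⟨x, hx1, hx2⟩
    obtain ⟨l', c', hl', heq, hlt⟩ := simplex_subface hind hC hCne hSB
    have hbd : ∀ x ∈ F, l' x ≤ c' := by
      rw [← hT.face_conv_verts hF]
      refine hull_le fun a ha => ?_
      by_cases haC : a ∈ C
      · exact le_of_eq (heq a haC)
      · rw [hlt a ⟨ha, haC⟩]; linarith
    obtain ⟨c₀, hc₀⟩ := hCne
    have hc₀F : c₀ ∈ F := verts_subset (hC hc₀)
    have hne : ({x | x ∈ F ∧ l' x = c'} : Set (Euc N)).Nonempty :=
      ⟨c₀, hc₀F, heq c₀ hc₀⟩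
    have hface := face_trans hT hF hl' hbd hne
    have hgoal : {x | x ∈ F ∧ l' x = c'} = convexHull ℝ C := by
      apply subset_antisymm
      · have hvsub : verts {x | x ∈ F ∧ l' x = c'} ⊆ C := by
          intro a ha
          have haP : a ∈ verts P := verts_face_subset hface ha
          have haG : a ∈ {x | x ∈ F ∧ l' x = c'} := verts_subset ha
          have haF : a ∈ verts F := by
            rw [verts_properFace hF]; exact ⟨haP, haG.1⟩
          by_contra haC
          have := hlt a ⟨haF, haC⟩
          rw [haG.2] at this
          linarith
        calc {x | x ∈ F ∧ l' x = c'}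
            = convexHull ℝ (verts {x | x ∈ F ∧ l' x = c'}) :=
              (hT.face_conv_verts hface).symm
          _ ⊆ convexHull ℝ C := convexHull_mono hvsub
      · refine conv_subset_of_subset (properFace_convex hT.2.1 hface) fun x hx => ?_
        exact ⟨verts_subset (hC hx), heq x hx⟩
    rw [← hgoal]
    exact hface

/-- Every nonempty set of at most `m` vertices of an `m`-neighbourly polytope with many
vertices is the vertex set of a proper face, namely its convex hull. -/
lemma exact_faces {m : ℕ} {P : Set (Euc N)} (hT : Tame P)
    (hKN : IsKNeighbourly P m) (hcard : 2 * m + 3 ≤ (verts P).ncard)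
    {B : Set (Euc N)} (hB : B ⊆ verts P) (hBne : B.Nonempty) (hsize : B.ncard ≤ m) :
    IsProperFace P (convexHull ℝ B) ∧ verts (convexHull ℝ B) = B := by
  obtain ⟨D, hBD, hD, hDcard⟩ := Set.exists_subsuperset_card_eq hB hsize (by omega)
  obtain ⟨F, hFface, hFverts⟩ := hKN D hD hDcard
  have hind : AffineIndependent ℝ ((↑) : verts F → Euc N) := by
    rw [hFverts]
    exact indep_of_card_le hT hKN hcard hD (by omega)
  exact subface_of_indep hT hFface hind (hFverts ▸ hBD) hBne

lemma card_coe_eq (A : Set (Euc N)) [Fintype ↥A] : Fintype.card ↥A = A.ncard := by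
  rw [← Nat.card_coe_set_eq, Nat.card_eq_fintype_card]

lemma finrank_vectorSpan_eq_of_indep {A : Set (Euc N)} (hfin : A.Finite) (hne : A.Nonempty)
    (hind : AffineIndependent ℝ ((↑) : A → Euc N)) :
    Module.finrank ℝ (vectorSpan ℝ A) = A.ncard - 1 := by
  haveI := hfin.fintype
  have hpos : 1 ≤ A.ncard := (ncard_pos hfin).mpr hne
  have hc : Fintype.card ↥A = (A.ncard - 1) + 1 := by
    rw [card_coe_eq]; omega
  have := hind.finrank_vectorSpan hc
  rwa [Subtype.range_coe] at this

lemma pdim_conv_of_indep {A : Set (Euc N)} (hfin : A.Finite) (hne : A.Nonempty)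
    (hind : AffineIndependent ℝ ((↑) : A → Euc N)) :
    pdim (convexHull ℝ A) = (A.ncard : ℤ) - 1 := by
  have h1 : convexHull ℝ A ≠ ∅ := by
    rw [← nonempty_iff_ne_empty, convexHull_nonempty_iff (𝕜 := ℝ)]
    exact hne
  rw [pdim, if_neg h1, affineSpan_convexHull, direction_affineSpan,
    finrank_vectorSpan_eq_of_indep hfin hne hind]
  have hpos : 1 ≤ A.ncard := (ncard_pos hfin).mpr hne
  omega

lemma pdim_eq_finrank_vectorSpan_verts {P G : Set (Euc N)} (hT : Tame P)
    (hG : IsProperFace P G) :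
    pdim G = (Module.finrank ℝ (vectorSpan ℝ (verts G)) : ℤ) := by
  have hGne : G ≠ ∅ := (properFace_nonempty hG).ne_empty
  have hspan : affineSpan ℝ G = affineSpan ℝ (verts G) := by
    conv_lhs => rw [← hT.face_conv_verts hG]
    rw [affineSpan_convexHull]
  rw [pdim, if_neg hGne, hspan, direction_affineSpan]

/-- Any proper face of an `m`-neighbourly `Tame` polytope with at least `2m+3` vertices and
`pdim` at most `2m-1` is a simplex: it has exactly `pdim + 1` affinely independent vertices. -/
lemma face_verts_card {m : ℕ} {P G : Set (Euc N)} (hT : Tame P)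
    (hKN : IsKNeighbourly P m) (hcard : 2 * m + 3 ≤ (verts P).ncard)
    (hG : IsProperFace P G) {j : ℕ} (hdim : pdim G = (j : ℤ)) (hj : j + 2 ≤ 2 * m + 1) :
    (verts G).ncard = j + 1 ∧ AffineIndependent ℝ ((↑) : verts G → Euc N) := by
  have hfin : (verts G).Finite := hT.2.2.subset (verts_face_subset hG)
  have hne : (verts G).Nonempty := hT.face_verts_nonempty hG
  have hrank : Module.finrank ℝ (vectorSpan ℝ (verts G)) = j := by
    have := pdim_eq_finrank_vectorSpan_verts hT hG
    rw [hdim] at this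
    exact_mod_cast this.symm
  -- upper bound on the number of vertices
  have hub : (verts G).ncard ≤ j + 1 := by
    by_contra hgt
    push_neg at hgt
    obtain ⟨B, hBsub, hBcard⟩ := Set.exists_subset_card_eq (s := verts G) (n := j + 2) (by omega)
    have hBfin : B.Finite := hfin.subset hBsub
    have hdep : ¬ AffineIndependent ℝ ((↑) : B → Euc N) := by
      intro hindB
      haveI := hBfin.fintype
      have hcB : Fintype.card ↥B = (j + 1) + 1 := by rw [card_coe_eq]; omega
      have h1 := hindB.finrank_vectorSpan hcB
      rw [Subtype.range_coe] at h1
      have h2 : vectorSpan ℝ B ≤ vectorSpan ℝ (verts G) := vectorSpan_mono ℝ hBsub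
      have h3 := Submodule.finrank_mono h2
      omega
    obtain ⟨Z₁, Z₂, h1, h2, hdisj, hunion, p, hp1, hp2⟩ := radon_sets hdep
    have hfin1 : Z₁.Finite := hBfin.subset h1
    have hfin2 : Z₂.Finite := hBfin.subset h2
    have hZ₁ne : Z₁.Nonempty := (convexHull_nonempty_iff (𝕜 := ℝ)).mp ⟨p, hp1⟩
    have hZ₂ne : Z₂.Nonempty := (convexHull_nonempty_iff (𝕜 := ℝ)).mp ⟨p, hp2⟩
    have hsizes : Z₁.ncard + Z₂.ncard = j + 2 := by
      rw [← ncard_union_eq hdisj hfin1 hfin2, hunion, hBcard]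
    have key : ∀ W₁ W₂ : Set (Euc N), W₁ ⊆ verts P → W₂ ⊆ verts P → Disjoint W₁ W₂ →
        W₁.Nonempty → W₁.ncard ≤ m → (p ∈ convexHull ℝ W₁) → (p ∈ convexHull ℝ W₂) →
        False := by
      intro W₁ W₂ hW₁ hW₂ hd hW₁ne hW₁m hq1 hq2
      obtain ⟨hface, hverts⟩ := exact_faces hT hKN hcard hW₁ hW₁ne hW₁m
      refine face_separation hT hface (subset_convexHull ℝ W₁) hW₂ ?_ hq1 hq2
      rw [hverts, eq_empty_iff_forall_notMem]
      rintro z ⟨hz1, hz2⟩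
      exact (disjoint_left.mp hd) hz1 hz2
    have hBP : B ⊆ verts P := hBsub.trans (verts_face_subset hG)
    rcases le_total Z₁.ncard Z₂.ncard with hle | hle
    · exact key Z₁ Z₂ (h1.trans hBP) (h2.trans hBP) hdisj hZ₁ne (by omega) hp1 hp2
    · exact key Z₂ Z₁ (h2.trans hBP) (h1.trans hBP) hdisj.symm hZ₂ne (by omega) hp2 hp1
  -- lower bound
  have hlb : j + 1 ≤ (verts G).ncard := by
    haveI := hfin.fintype
    have hpos : 1 ≤ (verts G).ncard := (ncard_pos hfin).mpr hne
    have hc : Fintype.card ↥(verts G) = ((verts G).ncard - 1) + 1 := by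
      rw [card_coe_eq]; omega
    have := finrank_vectorSpan_range_le ℝ ((↑) : verts G → Euc N) hc
    rw [Subtype.range_coe, hrank] at this
    omega
  have hcardeq : (verts G).ncard = j + 1 := le_antisymm hub hlb
  refine ⟨hcardeq, ?_⟩
  haveI := hfin.fintype
  have hc : Fintype.card ↥(verts G) = j + 1 := by rw [card_coe_eq, hcardeq]
  rw [affineIndependent_iff_finrank_vectorSpan_eq ℝ ((↑) : verts G → Euc N) hc,
    Subtype.range_coe]
  exact hrank

end Aux

/-- Let `P` be a neighbourly `2m`-polytope (`m > 1`) with at least `2m+3`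
vertices, `U` a universal `k`-face of `P`, and `V` an `n`-face of `P` with `U ⊆ V` and
`0 ≤ k < n ≤ 2m-1`. Then `V` is a universal `n`-face of `P` iff `V/U` is a universal
`(n-k-1)`-face of the quotient polytope `P/U`. -/
theorem statement_0 {m k n N' : ℕ} (hm : 1 < m)
    (P U V : Set (Euc (2 * m))) (Q : Set (Euc N')) (φ : Euc (2 * m) → Euc N')
    (hP : IsNeighbourly (2 * m) P) (hcard : 2 * m + 3 ≤ (verts P).ncard)
    (hU : IsUniversalFace (2 * m) P U k)
    (hV : IsFaceOfDim P V (n : ℤ)) (hUV : U ⊆ V)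
    (hkn : k < n) (hn : n ≤ 2 * m - 1)
    (hQ : IsQuotient P U Q φ) :
    IsUniversalFace (2 * m) P V n ↔
      IsUniversalFace (2 * m - k - 1) Q
        (convexHull ℝ (φ '' (verts V \ verts U))) (n - k - 1) := by
  classical
  obtain ⟨hPoly, hPdim, hKN'⟩ := hP
  have hKN : IsKNeighbourly P m := by
    have h2m : 2 * m / 2 = m := by omega
    rwa [h2m] at hKN'
  have hT : Aux.Tame P := Aux.tame_of_isPolytope hPoly
  obtain ⟨hQpoly, hbij, hiff⟩ := hQ
  have hQT : Aux.Tame Q := Aux.tame_of_isPolytope hQpoly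
  obtain ⟨⟨hUface, hUdim⟩, hUuniv⟩ := hU
  obtain ⟨hVface, hVdim⟩ := hV
  obtain ⟨hVcard, hVind⟩ := Aux.face_verts_card hT hKN hcard hVface hVdim (by omega)
  obtain ⟨hUcard, hUind⟩ := Aux.face_verts_card hT hKN hcard hUface hUdim (by omega)
  have hPfin : (verts P).Finite := hT.2.2
  have hVP : verts V ⊆ verts P := Aux.verts_face_subset hVface
  have hUP : verts U ⊆ verts P := Aux.verts_face_subset hUface
  have hVfin : (verts V).Finite := hPfin.subset hVP
  have hUVsub : verts U ⊆ verts V := by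
    intro x hx
    rw [Aux.verts_properFace hVface]
    exact ⟨hUP hx, hUV (Aux.verts_subset hx)⟩
  set W₀ : Set (Euc (2 * m)) := verts V \ verts U with hW₀def
  have hW₀sub : W₀ ⊆ verts P \ verts U := fun x hx => ⟨hVP hx.1, hx.2⟩
  have hW₀fin : W₀.Finite := hVfin.diff
  have hW₀card : W₀.ncard = n - k := by
    rw [hW₀def, Set.ncard_diff hUVsub (hPfin.subset hUP), hVcard, hUcard]
    omega
  have hW₀ne : W₀.Nonempty := by
    refine (Set.ncard_pos hW₀fin).mp ?_
    rw [hW₀card]; omega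
  have hvertsid : verts Q = φ '' (verts P \ verts U) := hbij.image_eq.symm
  have hφW₀sub : φ '' W₀ ⊆ verts Q := by rw [hvertsid]; exact image_mono hW₀sub
  have hφW₀ne : (φ '' W₀).Nonempty := hW₀ne.image φ
  have hφW₀fin : (φ '' W₀).Finite := hW₀fin.image φ
  have hφW₀card : (φ '' W₀).ncard = n - k := by
    rw [Set.ncard_image_of_injOn (hbij.injOn.mono hW₀sub), hW₀card]
  have hUconv : convexHull ℝ (verts U) = U := hT.face_conv_verts hUface
  have hVconv : convexHull ℝ (verts V) = V := hT.face_conv_verts hVface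
  have hQcard : (verts Q).ncard = (verts P).ncard - (k + 1) := by
    rw [hvertsid, Set.ncard_image_of_injOn hbij.injOn,
      Set.ncard_diff hUP (hPfin.subset hUP), hUcard]
  set X : Set (Euc N') := convexHull ℝ (φ '' W₀) with hXdef
  have hXverts : verts X = φ '' W₀ := Aux.verts_hull_union hQT hφW₀sub
  -- no subset of `φ '' W₀` is all of `verts Q`
  have hQne_aux : ∀ Z : Set (Euc N'), Z ⊆ φ '' W₀ → verts Q ≠ Z := by
    intro Z hZ hQZ
    have h1 : φ '' (verts P \ verts U) ⊆ φ '' W₀ := by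
      rw [← hvertsid, hQZ]; exact hZ
    have h2 : verts P \ verts U ⊆ W₀ :=
      (hbij.injOn.image_subset_image_iff subset_rfl hW₀sub).mp h1
    have h3 : verts P ⊆ verts V := by
      intro x hx
      by_cases hxU : x ∈ verts U
      · exact hUVsub hxU
      · exact (h2 ⟨hx, hxU⟩).1
    have h4 : (verts P).ncard ≤ (verts V).ncard := Set.ncard_le_ncard h3 hVfin
    omega
  constructor
  · -- forward direction
    rintro ⟨-, hVuniv⟩
    -- X is a proper face of Q
    obtain ⟨F', hF'face, hF'verts⟩ := (hiff W₀ hW₀sub).mp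
      ⟨V, Or.inr (Or.inr hVface), hUV, by rw [hW₀def, diff_union_of_subset hUVsub]⟩
    have hF'proper : IsProperFace Q F' := by
      rcases hF'face with h | h | h
      · exfalso
        rw [h, Aux.verts_empty] at hF'verts
        exact hφW₀ne.ne_empty hF'verts.symm
      · exact absurd (h ▸ hF'verts : verts Q = φ '' W₀) (hQne_aux _ subset_rfl)
      · exact h
    have hF'eq : F' = X := by
      rw [← hQT.face_conv_verts hF'proper, hF'verts]
    have hXface : IsProperFace Q X := hF'eq ▸ hF'proper
    -- X has affinely independent vertices
    have hXind : AffineIndependent ℝ ((↑) : (φ '' W₀) → Euc N') := by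
      by_contra hdep
      obtain ⟨Z₁, Z₂, h1, h2, hdisj, hunion, p, hp1, hp2⟩ := Aux.radon_sets hdep
      have hZ₁ne : Z₁.Nonempty := (convexHull_nonempty_iff (𝕜 := ℝ)).mp ⟨p, hp1⟩
      set B₁ : Set (Euc (2 * m)) := W₀ ∩ φ ⁻¹' Z₁ with hB₁def
      have himg : φ '' B₁ = Z₁ := by
        rw [hB₁def, Set.image_inter_preimage]
        exact inter_eq_right.mpr h1
      have hB₁W₀ : B₁ ⊆ W₀ := inter_subset_left
      have hB₁ne : B₁.Nonempty := by
        obtain ⟨z, hz⟩ := hZ₁ne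
        obtain ⟨w, hw, rfl⟩ := h1 hz
        exact ⟨w, hw, hz⟩
      set C₁ : Set (Euc (2 * m)) := B₁ ∪ verts U with hC₁def
      have hC₁sub : C₁ ⊆ verts V :=
        union_subset (hB₁W₀.trans diff_subset) hUVsub
      obtain ⟨hC₁face, hC₁verts⟩ :=
        Aux.subface_of_indep hT hVface hVind hC₁sub (hB₁ne.mono subset_union_left)
      have hUC₁ : U ⊆ convexHull ℝ C₁ := by
        rw [← hUconv]; exact convexHull_mono subset_union_right
      obtain ⟨F₁, hF₁face, hF₁verts⟩ := (hiff B₁ (hB₁W₀.trans hW₀sub)).mp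
        ⟨convexHull ℝ C₁, Or.inr (Or.inr hC₁face), hUC₁, by rw [hC₁verts]⟩
      rw [himg] at hF₁verts
      have hF₁proper : IsProperFace Q F₁ := by
        rcases hF₁face with h | h | h
        · exfalso
          rw [h, Aux.verts_empty] at hF₁verts
          exact hZ₁ne.ne_empty hF₁verts.symm
        · exact absurd (h ▸ hF₁verts : verts Q = Z₁) (hQne_aux _ h1)
        · exact h
      have hZ₁F₁ : Z₁ ⊆ F₁ := by rw [← hF₁verts]; exact Aux.verts_subset
      have hdisjF : verts F₁ ∩ Z₂ = ∅ := by
        rw [hF₁verts, eq_empty_iff_forall_notMem]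
        rintro z ⟨hz1, hz2⟩
        exact (disjoint_left.mp hdisj) hz1 hz2
      exact Aux.face_separation hQT hF₁proper hZ₁F₁ (h2.trans hφW₀sub) hdisjF hp1 hp2
    have hXdim : pdim X = ((n : ℤ) - k - 1) := by
      rw [hXdef, Aux.pdim_conv_of_indep hφW₀fin hφW₀ne hXind, hφW₀card]
      omega
    refine ⟨⟨hXface, ?_⟩, ?_⟩
    · rw [hXdim]; omega
    · -- universality of X in Q
      intro T hTsub hTcard
      have hTbound : T.ncard ≤ (2 * m - n - 1) / 2 := by
        have he : 2 * m - k - 1 - (n - k - 1) - 1 = 2 * m - n - 1 := by omega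
        rwa [he] at hTcard
      set S : Set (Euc (2 * m)) := (verts P \ verts U) ∩ φ ⁻¹' T with hSdef
      have hSsub : S ⊆ verts P \ verts U := inter_subset_left
      have himgS : φ '' S = T := by
        rw [hSdef, Set.image_inter_preimage, hbij.image_eq]
        exact inter_eq_right.mpr hTsub
      have hScard : S.ncard = T.ncard := by
        rw [← himgS, Set.ncard_image_of_injOn (hbij.injOn.mono hSsub)]
      have hSP : S ⊆ verts P := hSsub.trans diff_subset
      have hFface : IsProperFace P (convexHull ℝ (S ∪ V)) :=
        hVuniv S hSP (by rw [hScard]; exact hTbound)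
      have hhull : convexHull ℝ (S ∪ V) = convexHull ℝ (S ∪ verts V) := by
        conv_lhs => rw [← hVconv]
        rw [convexHull_convexHull_union_right]
      have hFverts : verts (convexHull ℝ (S ∪ V)) = S ∪ verts V := by
        rw [hhull]; exact Aux.verts_hull_union hT (union_subset hSP hVP)
      set W : Set (Euc (2 * m)) := S ∪ W₀ with hWdef
      have hWsub : W ⊆ verts P \ verts U := union_subset hSsub hW₀sub
      have hWU : W ∪ verts U = S ∪ verts V := by
        rw [hWdef, union_assoc, hW₀def, diff_union_of_subset hUVsub]
      have hUF : U ⊆ convexHull ℝ (S ∪ V) :=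
        hUV.trans (subset_union_right.trans (subset_convexHull ℝ _))
      obtain ⟨F₂, hF₂face, hF₂verts⟩ := (hiff W hWsub).mp
        ⟨convexHull ℝ (S ∪ V), Or.inr (Or.inr hFface), hUF, by rw [hFverts, hWU]⟩
      have hφW : φ '' W = T ∪ φ '' W₀ := by rw [hWdef, image_union, himgS]
      rw [hφW] at hF₂verts
      have hF₂proper : IsProperFace Q F₂ := by
        rcases hF₂face with h | h | h
        · exfalso
          rw [h, Aux.verts_empty] at hF₂verts
          exact (hφW₀ne.mono subset_union_right).ne_empty hF₂verts.symm
        · exfalso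
          have hQeq : verts Q = T ∪ φ '' W₀ := h ▸ hF₂verts
          have hle : (verts Q).ncard ≤ T.ncard + (φ '' W₀).ncard := by
            rw [hQeq]; exact Set.ncard_union_le _ _
          have hdiv : (2 * m - n - 1) / 2 ≤ 2 * m - n - 1 := Nat.div_le_self _ 2
          omega
        · exact h
      have hF₂eq : F₂ = convexHull ℝ (T ∪ X) := by
        rw [← hQT.face_conv_verts hF₂proper, hF₂verts, hXdef,
          convexHull_convexHull_union_right]
      rw [← hF₂eq] at *
      exact hF₂proper
  · -- backward direction
    rintro ⟨⟨hXface, hXdim⟩, hXuniv⟩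
    refine ⟨⟨hVface, hVdim⟩, ?_⟩
    intro S hSsub hScard
    set S' : Set (Euc (2 * m)) := S \ verts V with hS'def
    have hS'sub : S' ⊆ verts P \ verts U :=
      fun x hx => ⟨hSsub hx.1, fun hxU => hx.2 (hUVsub hxU)⟩
    set T : Set (Euc N') := φ '' S' with hTdef
    have hTsub : T ⊆ verts Q := by rw [hvertsid, hTdef]; exact image_mono hS'sub
    have hTcard : T.ncard = S'.ncard := Set.ncard_image_of_injOn (hbij.injOn.mono hS'sub)
    have hS'card : S'.ncard ≤ S.ncard :=
      Set.ncard_le_ncard diff_subset (hPfin.subset hSsub)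
    have hTbound : T.ncard ≤ (2 * m - k - 1 - (n - k - 1) - 1) / 2 := by
      have he : 2 * m - k - 1 - (n - k - 1) - 1 = 2 * m - n - 1 := by omega
      rw [he, hTcard]
      exact le_trans hS'card hScard
    have hF'face : IsProperFace Q (convexHull ℝ (T ∪ X)) := hXuniv T hTsub hTbound
    have hTXhull : convexHull ℝ (T ∪ X) = convexHull ℝ (T ∪ φ '' W₀) := by
      rw [hXdef, convexHull_convexHull_union_right]
    have hF'verts : verts (convexHull ℝ (T ∪ X)) = T ∪ φ '' W₀ := by
      rw [hTXhull]; exact Aux.verts_hull_union hQT (union_subset hTsub hφW₀sub)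
    set W : Set (Euc (2 * m)) := S' ∪ W₀ with hWdef
    have hWsub : W ⊆ verts P \ verts U := union_subset hS'sub hW₀sub
    have hφW : φ '' W = T ∪ φ '' W₀ := by rw [hWdef, image_union, hTdef]
    obtain ⟨F, hFface, hUF, hFverts⟩ := (hiff W hWsub).mpr
      ⟨convexHull ℝ (T ∪ X), Or.inr (Or.inr hF'face), by rw [hF'verts, hφW]⟩
    have hWU : W ∪ verts U = S ∪ verts V := by
      rw [hWdef, union_assoc, hW₀def, diff_union_of_subset hUVsub, hS'def,
        diff_union_self]
    rw [hWU] at hFverts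
    rcases hFface with h | h | h
    · exfalso
      have hVne : (verts V).Nonempty := hT.face_verts_nonempty hVface
      rw [h, Aux.verts_empty] at hFverts
      exact (hVne.mono subset_union_right).ne_empty hFverts.symm
    · exfalso
      have h1 : verts P = S ∪ verts V := h ▸ hFverts
      have h2 : (verts P).ncard ≤ S.ncard + (verts V).ncard := by
        rw [h1]; exact Set.ncard_union_le _ _
      have h3 : S.ncard ≤ 2 * m - n - 1 :=
        le_trans hScard (Nat.div_le_self _ 2)
      omega
    · have hhull : convexHull ℝ (S ∪ V) = convexHull ℝ (S ∪ verts V) := by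
        conv_lhs => rw [← hVconv]
        rw [convexHull_convexHull_union_right]
      have hFeq : F = convexHull ℝ (S ∪ V) := by
        rw [← hT.face_conv_verts h, hFverts, hhull]
      rw [← hFeq]
      exact h
end
end

section
/- Let C be a cyclic 2ℓ-polytope with 2ℓ+2 vertices. Then C has exactly two missing faces, i.e. |ℳ(C)| = 2; the two missing faces are disjoint, and each has exactly ℓ+1 vertices. -/
open Set

noncomputable section

section AuxMissing
open Polynomial Finset

lemma euc_sum_apply {N : ℕ} {α : Type*} (s : Finset α) (f : α → Euc N) (i : Fin N) :
    (∑ j ∈ s, f j) i = ∑ j ∈ s, f j i := by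
  rw [WithLp.ofLp_sum]; exact Finset.sum_apply i s (fun j => (f j).ofLp)

/-- sign decomposition of a product of nonzero reals -/

lemma prod_sign {α : Type*} (s : Finset α) (f : α → ℝ) (hf : ∀ i ∈ s, f i ≠ 0) :
    ∃ r : ℝ, 0 < r ∧ ∏ i ∈ s, f i = (-1 : ℝ) ^ ((s.filter (fun i => f i < 0)).card) * r := by
  classical
  refine ⟨(∏ i ∈ s.filter (fun i => f i < 0), (-f i)) * ∏ i ∈ s.filter (fun i => ¬ f i < 0), f i,
    ?_, ?_⟩
  · apply mul_pos
    · exact Finset.prod_pos (fun i hi => by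
        simp only [Finset.mem_filter] at hi; linarith [hi.2])
    · exact Finset.prod_pos (fun i hi => by
        simp only [Finset.mem_filter] at hi
        exact lt_of_le_of_ne (not_lt.mp hi.2) (Ne.symm (hf i hi.1)))
  · rw [← Finset.prod_filter_mul_prod_filter_not s (fun i => f i < 0) f]
    have : ∏ i ∈ s.filter (fun i => f i < 0), f i
        = (-1 : ℝ) ^ ((s.filter (fun i => f i < 0)).card) * ∏ i ∈ s.filter (fun i => f i < 0), (-f i) := by
      rw [← Finset.prod_const, ← Finset.prod_mul_distrib]
      apply Finset.prod_congr rfl; intro i _; ring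
    rw [this]; ring

lemma mem_hull_image_iff {N : ℕ} {α : Type*} (s : Finset α) (f : α → Euc N)
    (hf : Set.InjOn f s) (x : Euc N) :
    x ∈ convexHull ℝ (f '' ↑s) ↔
      ∃ w : α → ℝ, (∀ i ∈ s, 0 ≤ w i) ∧ ∑ i ∈ s, w i = 1 ∧ ∑ i ∈ s, w i • f i = x := by
  classical
  constructor
  · intro hx
    have : (f '' ↑s) = ↑(s.image f) := by simp
    rw [this, Finset.mem_convexHull'] at hx
    obtain ⟨W, hW0, hW1, hWx⟩ := hx
    refine ⟨fun i => W (f i), fun i hi => hW0 _ (Finset.mem_image_of_mem f hi), ?_, ?_⟩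
    · rw [← hW1, Finset.sum_image (fun a ha b hb => hf ha hb)]
    · rw [← hWx, Finset.sum_image (fun a ha b hb => hf ha hb)]
  · rintro ⟨w, hw0, hw1, rfl⟩
    rw [← Finset.centerMass_eq_of_sum_1 _ _ hw1]
    exact Finset.centerMass_mem_convexHull _ hw0 (by rw [hw1]; norm_num)
      (fun i hi => Set.mem_image_of_mem f hi)

def coeffLin {N : ℕ} (a : Fin N → ℝ) : Euc N →ₗ[ℝ] ℝ where
  toFun := fun x => ∑ i, a i * x i
  map_add' := by
    intro x y
    have : ∀ i : Fin N, a i * (x + y) i = a i * x i + a i * y i := by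
      intro i; have h : (x + y) i = x i + y i := rfl
      rw [h]; ring
    show ∑ i, a i * (x + y) i = _
    rw [Finset.sum_congr rfl (fun i _ => this i), Finset.sum_add_distrib]
  map_smul' := by
    intro c x
    show ∑ i, a i * (c • x) i = _
    simp only [RingHom.id_apply, smul_eq_mul, Finset.mul_sum]
    apply Finset.sum_congr rfl
    intro i _
    have : (c • x) i = c * x i := rfl
    rw [this]; ring

lemma coeffLin_apply {N : ℕ} (a : Fin N → ℝ) (x : Euc N) : coeffLin a x = ∑ i, a i * x i := rfl

lemma momentCurve_inj {d : ℕ} (hd : 0 < d) : Function.Injective (momentCurve d) := by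
  intro s t h
  have := congrArg (fun x : Euc d => x ⟨0, hd⟩) h
  simpa [momentCurve] using this

lemma exists_lin_of_poly {N : ℕ} (q : ℝ[X]) (hq : q.natDegree ≤ N) :
    ∃ L : Euc N →ₗ[ℝ] ℝ, ∀ t : ℝ, L (momentCurve N t) = q.coeff 0 - q.eval t := by
  refine ⟨coeffLin (fun i => -(q.coeff ((i : ℕ) + 1))), fun t => ?_⟩
  rw [coeffLin_apply]
  have hev : q.eval t = ∑ i ∈ Finset.range (N + 1), q.coeff i * t ^ i :=
    eval_eq_sum_range' (lt_of_le_of_lt hq (Nat.lt_succ_self N)) t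
  rw [hev, Finset.sum_range_succ']
  have h2 : ∀ i : Fin N, (-(q.coeff ((i : ℕ) + 1))) * (momentCurve N t i)
      = -(q.coeff ((i : ℕ) + 1) * t ^ ((i : ℕ) + 1)) := by
    intro i; have h : momentCurve N t i = t ^ ((i:ℕ)+1) := rfl
    rw [h]; ring
  rw [Finset.sum_congr rfl (fun i _ => h2 i)]
  rw [Fin.sum_univ_eq_sum_range (fun i => -(q.coeff (i + 1) * t ^ (i + 1)))]
  rw [Finset.sum_neg_distrib]
  simp only [pow_zero, mul_one]
  ring

lemma face_of_poly {l n : ℕ} (hl : 1 ≤ l) (hn : n = 2*l+2) (uu : ℕ → ℝ)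
    (hmono : ∀ i j : ℕ, i < j → j < n → uu i < uu j)
    (q : ℝ[X]) (hdeg : q.natDegree ≤ 2*l) (S : Finset ℕ) (hSn : ∀ i ∈ S, i < n)
    (hSne : S.Nonempty)
    (hzero : ∀ i ∈ S, q.eval (uu i) = 0)
    (hpos : ∀ j, j < n → j ∉ S → 0 < q.eval (uu j))
    (hTne : ∃ j, j < n ∧ j ∉ S) :
    IsProperFace (convexHull ℝ ((fun i => momentCurve (2*l) (uu i)) '' (Set.Iio n)))
      (convexHull ℝ ((fun i => momentCurve (2*l) (uu i)) '' ↑S)) := by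
  classical
  set g : ℕ → Euc (2*l) := fun i => momentCurve (2*l) (uu i) with hg
  have hlpos : 0 < 2*l := by omega
  have huinj : ∀ i j : ℕ, i < n → j < n → uu i = uu j → i = j := by
    intro i j hi hj h
    rcases lt_trichotomy i j with h'|h'|h'
    · exact absurd h (ne_of_lt (hmono i j h' hj))
    · exact h'
    · exact absurd h.symm (ne_of_lt (hmono j i h' hi))
  have hinj : ∀ i j : ℕ, i < n → j < n → g i = g j → i = j := by
    intro i j hi hj h
    exact huinj i j hi hj (momentCurve_inj hlpos h)
  have hrange : (g '' ↑(Finset.range n) : Set (Euc (2*l))) = g '' Set.Iio n := by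
    rw [Finset.coe_range]
  obtain ⟨L, hL⟩ := exists_lin_of_poly q hdeg
  set c := q.coeff 0 with hc
  have hLg : ∀ i : ℕ, L (g i) = c - q.eval (uu i) := fun i => hL (uu i)
  have hevnn : ∀ i, i < n → 0 ≤ q.eval (uu i) := by
    intro i hi
    by_cases hiS : i ∈ S
    · rw [hzero i hiS]
    · exact le_of_lt (hpos i hi hiS)
  have hle : ∀ x ∈ convexHull ℝ (g '' Set.Iio n), L x ≤ c := by
    intro x hx
    have : convexHull ℝ (g '' Set.Iio n) ⊆ {x | L x ≤ c} := by
      apply convexHull_min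
      · rintro _ ⟨i, hi, rfl⟩
        have : L (g i) = c - q.eval (uu i) := hLg i
        simp only [Set.mem_setOf_eq, this]
        linarith [hevnn i hi]
      · exact convex_halfSpace_le ⟨L.map_add, L.map_smul⟩ c
    exact this hx
  obtain ⟨i0, hi0⟩ := hSne
  obtain ⟨j0, hj0n, hj0S⟩ := hTne
  refine ⟨L, c, ?_, hle, ?_, ?_⟩
  · intro h0
    have h1 : c = 0 := by
      have := hLg i0
      rw [h0] at this
      simp only [LinearMap.zero_apply] at this
      rw [hzero i0 hi0] at this
      linarith
    have h2 := hLg j0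
    rw [h0] at h2
    simp only [LinearMap.zero_apply] at h2
    have := hpos j0 hj0n hj0S
    rw [h1] at h2
    linarith
  · refine ⟨g i0, ?_, ?_⟩
    · exact subset_convexHull ℝ _ ⟨i0, hSn i0 hi0, rfl⟩
    · rw [hLg i0, hzero i0 hi0]; ring
  · apply Set.Subset.antisymm
    · -- hull (g '' S) ⊆ F
      intro x hx
      constructor
      · exact convexHull_mono (Set.image_mono (fun i hi => hSn i hi)) hx
      · have : convexHull ℝ (g '' ↑S) ⊆ {x | L x = c} := by
          apply convexHull_min
          · rintro _ ⟨i, hi, rfl⟩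
            simp only [Set.mem_setOf_eq, hLg i, hzero i hi]
            ring
          · exact convex_hyperplane ⟨L.map_add, L.map_smul⟩ c
        exact this hx
    · -- F ⊆ hull (g '' S)
      rintro x ⟨hxP, hxc⟩
      rw [← hrange] at hxP
      rw [mem_hull_image_iff _ _ (fun i hi j hj h => hinj i j (by simpa using hi) (by simpa using hj) h)] at hxP
      obtain ⟨w, hw0, hw1, hwx⟩ := hxP
      have hLx : ∑ i ∈ Finset.range n, w i * q.eval (uu i) = 0 := by
        have e1 : L x = ∑ i ∈ Finset.range n, w i * (c - q.eval (uu i)) := by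
          rw [← hwx, map_sum]
          apply Finset.sum_congr rfl
          intro i _
          rw [map_smul, hLg i, smul_eq_mul]
        have e2 : ∑ i ∈ Finset.range n, w i * (c - q.eval (uu i))
            = c - ∑ i ∈ Finset.range n, w i * q.eval (uu i) := by
          have : ∀ i ∈ Finset.range n, w i * (c - eval (uu i) q)
              = w i * c - w i * eval (uu i) q := by intro i _; ring
          rw [Finset.sum_congr rfl this, Finset.sum_sub_distrib, ← Finset.sum_mul, hw1, one_mul]
        rw [hxc, e2] at e1
        linarith
      have hwz : ∀ i ∈ Finset.range n, i ∉ S → w i = 0 := by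
        have := (Finset.sum_eq_zero_iff_of_nonneg (fun i hi =>
          mul_nonneg (hw0 i hi) (hevnn i (Finset.mem_range.mp hi)))).mp hLx
        intro i hi hiS
        have h := this i hi
        rcases mul_eq_zero.mp h with h'|h'
        · exact h'
        · exact absurd h' (by have := hpos i (Finset.mem_range.mp hi) hiS; linarith)
      have hSsub : S ⊆ Finset.range n := fun i hi => Finset.mem_range.mpr (hSn i hi)
      rw [mem_hull_image_iff S g (fun i hi j hj h => hinj i j (hSn i (by simpa using hi)) (hSn j (by simpa using hj)) h)]
      refine ⟨w, fun i hi => hw0 i (hSsub hi), ?_, ?_⟩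
      · rw [← hw1]
        exact Finset.sum_subset hSsub (fun i hi hniS => hwz i hi hniS)
      · rw [← hwx]
        exact Finset.sum_subset hSsub (fun i hi hniS => by rw [hwz i hi hniS, zero_smul])

lemma core {n : ℕ} (T : Finset ℕ) (hTn : ∀ j ∈ T, j < n)
    (ha : ∃ a ∈ T, a % 2 = 0) (hb : ∃ b ∈ T, b % 2 = 1) :
    ∃ (K : Finset ℕ) (ε : ℕ), K ⊆ T ∧ (∀ k ∈ K, 0 < k) ∧ K.card + 2 ≤ T.card ∧
      ∀ j ∈ T, (((Finset.range n \ T).filter (fun i => j < i)).card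
          + (K.filter (fun k => j < k)).card) % 2 = ε := by
  classical
  obtain ⟨a, haT, ha2⟩ := ha
  obtain ⟨b, hbT, hb2⟩ := hb
  have hTne : T.Nonempty := ⟨a, haT⟩
  set m := T.min' hTne with hm
  have hmT : m ∈ T := T.min'_mem hTne
  have hmmin : ∀ q ∈ T, m ≤ q := fun q hq => T.min'_le q hq
  clear_value m
  set K := T.filter (fun k => ∃ p ∈ T, p < k ∧ (k - p) % 2 = 0 ∧ ∀ q ∈ T, q < k → q ≤ p) with hK
  set gc : ℕ → ℕ := fun j => ((Finset.range n \ T).filter (fun i => j < i)).card with hgcdef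
  set hcn : ℕ → ℕ := fun j => (K.filter (fun k => j < k)).card with hhcdef
  have hKsub : K ⊆ T := Finset.filter_subset _ _
  have hKpos : ∀ k ∈ K, 0 < k := by
    intro k hk
    obtain ⟨-, p, -, hpk, -⟩ := Finset.mem_filter.mp hk
    omega
  have hstep : ∀ j ∈ T, j ≠ m →
      ∃ p ∈ T, p < j ∧ (gc p + hcn p) % 2 = (gc j + hcn j) % 2 := by
    intro j hj hjm
    have hmj : m < j := lt_of_le_of_ne (hmmin j hj) (Ne.symm hjm)
    have hTjne : (T.filter (· < j)).Nonempty := ⟨m, Finset.mem_filter.mpr ⟨hmT, hmj⟩⟩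
    set p := (T.filter (· < j)).max' hTjne with hp
    have hpmem := (T.filter (· < j)).max'_mem hTjne
    rw [Finset.mem_filter] at hpmem
    obtain ⟨hpT, hpj⟩ := hpmem
    rw [← hp] at hpT hpj
    have hmax : ∀ q ∈ T, q < j → q ≤ p := fun q hq hqj =>
      Finset.le_max' (T.filter (· < j)) q (Finset.mem_filter.mpr ⟨hq, hqj⟩)
    clear_value p
    have hgc : gc p = gc j + (j - p - 1) := by
      have hsetg : (Finset.range n \ T).filter (fun i => p < i)
          = ((Finset.range n \ T).filter (fun i => j < i)) ∪ Finset.Ioo p j := by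
        ext i
        simp only [Finset.mem_filter, Finset.mem_sdiff, Finset.mem_union, Finset.mem_Ioo,
          Finset.mem_range]
        constructor
        · rintro ⟨⟨hin, hiT⟩, hpi⟩
          rcases lt_trichotomy i j with h|h|h
          · right; exact ⟨hpi, h⟩
          · exact absurd (h ▸ hj) hiT
          · left; exact ⟨⟨hin, hiT⟩, h⟩
        · rintro (⟨⟨hin,hiT⟩,hji⟩|⟨hpi,hij⟩)
          · exact ⟨⟨hin,hiT⟩, lt_trans hpj hji⟩
          · refine ⟨⟨lt_trans hij (hTn j hj), fun hiT => ?_⟩, hpi⟩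
            exact absurd (hmax i hiT hij) (not_le.mpr hpi)
      have hdisj : Disjoint ((Finset.range n \ T).filter (fun i => j < i)) (Finset.Ioo p j) := by
        rw [Finset.disjoint_left]
        intro i hi1 hi2
        rw [Finset.mem_filter] at hi1
        rw [Finset.mem_Ioo] at hi2
        omega
      show ((Finset.range n \ T).filter (fun i => p < i)).card = _
      rw [hsetg, Finset.card_union_of_disjoint hdisj, Nat.card_Ioo]
    have hjKiff : j ∈ K ↔ (j - p) % 2 = 0 := by
      constructor
      · intro hjK
        rw [hK, Finset.mem_filter] at hjK
        obtain ⟨-, p', hp'T, hp'j, hpar, hmax'⟩ := hjK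
        have : p' = p := le_antisymm (hmax p' hp'T hp'j) (hmax' p hpT hpj)
        rw [← this]; exact hpar
      · intro hpar
        rw [hK, Finset.mem_filter]
        exact ⟨hj, p, hpT, hpj, hpar, hmax⟩
    have hhc : hcn p = hcn j + (if j ∈ K then 1 else 0) := by
      by_cases hjK : j ∈ K
      · rw [if_pos hjK]
        have hset : K.filter (fun k => p < k) = insert j (K.filter (fun k => j < k)) := by
          ext k
          simp only [Finset.mem_filter, Finset.mem_insert]
          constructor
          · rintro ⟨hkK, hpk⟩
            rcases lt_trichotomy k j with h|h|h
            · exact absurd (hmax k (hKsub hkK) h) (not_le.mpr hpk)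
            · left; exact h
            · right; exact ⟨hkK, h⟩
          · rintro (rfl|⟨hkK, hjk⟩)
            · exact ⟨hjK, hpj⟩
            · exact ⟨hkK, lt_trans hpj hjk⟩
        show (K.filter (fun k => p < k)).card = _
        rw [hset, Finset.card_insert_of_notMem (by simp)]
      · rw [if_neg hjK]
        have hset : K.filter (fun k => p < k) = K.filter (fun k => j < k) := by
          ext k
          simp only [Finset.mem_filter]
          constructor
          · rintro ⟨hkK, hpk⟩
            refine ⟨hkK, ?_⟩
            rcases lt_trichotomy k j with h|h|h
            · exact absurd (hmax k (hKsub hkK) h) (not_le.mpr hpk)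
            · exact absurd (h ▸ hkK) hjK
            · exact h
          · rintro ⟨hkK, hjk⟩
            exact ⟨hkK, lt_trans hpj hjk⟩
        show (K.filter (fun k => p < k)).card = (K.filter (fun k => j < k)).card + 0
        rw [hset]
        omega
      -- end
    refine ⟨p, hpT, hpj, ?_⟩
    by_cases hjK : j ∈ K
    · have h2 : (j - p) % 2 = 0 := hjKiff.mp hjK
      have hhc2 : hcn p = hcn j + 1 := by rw [hhc, if_pos hjK]
      omega
    · have h2 : (j - p) % 2 = 1 := by
        have h3 : ¬ (j - p) % 2 = 0 := fun h => hjK (hjKiff.mpr h)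
        omega
      have hhc2 : hcn p = hcn j := by rw [hhc, if_neg hjK]; omega
      omega

  have hinv : ∀ j, j ∈ T → (gc j + hcn j) % 2 = (gc m + hcn m) % 2 := by
    intro j
    induction j using Nat.strong_induction_on with
    | _ j IH =>
      intro hj
      by_cases hjm : j = m
      · rw [hjm]
      · obtain ⟨p, hpT, hpj, hpar⟩ := hstep j hj hjm
        rw [← hpar]
        exact IH p hpj hpT
  -- cardinality
  have hab : a ≠ b := by omega
  have hTcard : 2 ≤ T.card := by
    have hsub : ({a, b} : Finset ℕ) ⊆ T := by
      intro x hx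
      simp only [Finset.mem_insert, Finset.mem_singleton] at hx
      rcases hx with rfl|rfl
      · exact haT
      · exact hbT
    have := Finset.card_le_card hsub
    rwa [Finset.card_insert_of_notMem (by simpa using hab), Finset.card_singleton] at this
  have hfilne : (T.filter (fun k => ¬ k % 2 = m % 2)).Nonempty := by
    rcases Nat.mod_two_eq_zero_or_one m with hm2|hm2
    · exact ⟨b, Finset.mem_filter.mpr ⟨hbT, by omega⟩⟩
    · exact ⟨a, Finset.mem_filter.mpr ⟨haT, by omega⟩⟩
  set k₀ := (T.filter (fun k => ¬ k % 2 = m % 2)).min' hfilne with hk₀def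
  have hk₀mem := (T.filter (fun k => ¬ k % 2 = m % 2)).min'_mem hfilne
  rw [Finset.mem_filter] at hk₀mem
  obtain ⟨hk₀T, hk₀par⟩ := hk₀mem
  rw [← hk₀def] at hk₀T hk₀par
  have hk₀min0 : ∀ q ∈ T, ¬ q % 2 = m % 2 → k₀ ≤ q := fun q hq hqp =>
    Finset.min'_le _ q (Finset.mem_filter.mpr ⟨hq, hqp⟩)
  clear_value k₀
  have hk₀min : ∀ q ∈ T, ¬ q % 2 = m % 2 → k₀ ≤ q := hk₀min0
  have hk₀m : k₀ ≠ m := fun h => hk₀par (by rw [h])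
  have hmK : m ∉ K := by
    intro hmKmem
    rw [hK, Finset.mem_filter] at hmKmem
    obtain ⟨-, p, hpT, hpm, -, -⟩ := hmKmem
    exact absurd (hmmin p hpT) (not_le.mpr hpm)
  have hk₀K : k₀ ∉ K := by
    intro hk₀Kmem
    rw [hK, Finset.mem_filter] at hk₀Kmem
    obtain ⟨-, p, hpT, hpk, hpar, -⟩ := hk₀Kmem
    have hppar : ¬ p % 2 = m % 2 := by omega
    exact absurd (hk₀min p hpT hppar) (not_le.mpr hpk)
  have hKsub2 : K ⊆ (T.erase m).erase k₀ := by
    intro k hk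
    rw [Finset.mem_erase, Finset.mem_erase]
    exact ⟨fun h => hk₀K (h ▸ hk), fun h => hmK (h ▸ hk), hKsub hk⟩
  have hcard : K.card + 2 ≤ T.card := by
    have h1 := Finset.card_le_card hKsub2
    rw [Finset.card_erase_of_mem (Finset.mem_erase.mpr ⟨hk₀m, hk₀T⟩),
      Finset.card_erase_of_mem hmT] at h1
    omega
  exact ⟨K, (gc m + hcn m) % 2, hKsub, hKpos, hcard, hinv⟩

lemma faceA {l n : ℕ} (hl : 1 ≤ l) (hn : n = 2*l+2) (uu : ℕ → ℝ)
    (hmono : ∀ i j : ℕ, i < j → j < n → uu i < uu j)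
    (S : Finset ℕ) (hSn : ∀ i ∈ S, i < n) (hSne : S.Nonempty)
    (ha : ∃ a, a < n ∧ a % 2 = 0 ∧ a ∉ S) (hb : ∃ b, b < n ∧ b % 2 = 1 ∧ b ∉ S) :
    IsProperFace (convexHull ℝ ((fun i => momentCurve (2*l) (uu i)) '' (Set.Iio n)))
      (convexHull ℝ ((fun i => momentCurve (2*l) (uu i)) '' ↑S)) := by
  classical
  obtain ⟨a, han, ha2, haS⟩ := ha
  obtain ⟨b, hbn, hb2, hbS⟩ := hb
  set T := Finset.range n \ S with hTdef
  have hmemT : ∀ j, j ∈ T ↔ (j < n ∧ j ∉ S) := by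
    intro j; rw [hTdef, Finset.mem_sdiff, Finset.mem_range]
  have hTn : ∀ j ∈ T, j < n := fun j hj => ((hmemT j).mp hj).1
  have hSsub : S ⊆ Finset.range n := fun i hi => Finset.mem_range.mpr (hSn i hi)
  have hSrec : Finset.range n \ T = S := by
    ext i
    simp only [hTdef, Finset.mem_sdiff, Finset.mem_range]
    constructor
    · rintro ⟨hin, h2⟩
      by_contra hiS
      exact h2 ⟨hin, hiS⟩
    · intro hi
      exact ⟨hSn i hi, fun h => h.2 hi⟩
  obtain ⟨K, ε, hKT, hKpos, hKcard, hpar⟩ := core T hTn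
    ⟨a, (hmemT a).mpr ⟨han, haS⟩, ha2⟩ ⟨b, (hmemT b).mpr ⟨hbn, hbS⟩, hb2⟩
  set y : ℕ → ℝ := fun k => (uu (k-1) + uu k)/2 with hydef
  set q : ℝ[X] := C ((-1:ℝ)^ε) * ((∏ i ∈ S, (X - C (uu i))) * (∏ k ∈ K, (X - C (y k)))) with hq
  have hKn : ∀ k ∈ K, k < n := fun k hk => hTn k (hKT hk)
  have havg : ∀ k ∈ K, uu (k-1) < y k ∧ y k < uu k := by
    intro k hk
    have h1 : uu (k-1) < uu k := hmono (k-1) k (by have := hKpos k hk; omega) (hKn k hk)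
    constructor
    · show uu (k-1) < (uu (k-1) + uu k)/2; linarith
    · show (uu (k-1) + uu k)/2 < uu k; linarith
  have hcmp : ∀ j k, j < n → k ∈ K → (uu j < y k ↔ j < k) := by
    intro j k hj hk
    constructor
    · intro h
      by_contra hc
      push_neg at hc
      have : uu k ≤ uu j := by
        rcases eq_or_lt_of_le hc with h'|h'
        · rw [h']
        · exact le_of_lt (hmono k j h' hj)
      linarith [(havg k hk).2]
    · intro h
      have : uu j ≤ uu (k-1) := by
        rcases Nat.lt_or_ge j (k-1) with h'|h'
        · exact le_of_lt (hmono j (k-1) h' (by have := hKn k hk; omega))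
        · have : j = k - 1 := by omega
          rw [this]
      linarith [(havg k hk).1]
  have huinj : ∀ i j : ℕ, i < n → j < n → i ≠ j → uu i ≠ uu j := by
    intro i j hi hj hij
    rcases lt_trichotomy i j with h|h|h
    · exact ne_of_lt (hmono i j h hj)
    · exact absurd h hij
    · exact (ne_of_lt (hmono j i h hi)).symm
  -- degree
  have hprodS : (∏ i ∈ S, (X - C (uu i))).natDegree = S.card := by
    rw [Polynomial.natDegree_prod _ _ (fun i _ => Polynomial.X_sub_C_ne_zero _)]
    simp [Polynomial.natDegree_X_sub_C]
  have hprodK : (∏ k ∈ K, (X - C (y k))).natDegree = K.card := by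
    rw [Polynomial.natDegree_prod _ _ (fun i _ => Polynomial.X_sub_C_ne_zero _)]
    simp [Polynomial.natDegree_X_sub_C]
  have hCne : ((-1:ℝ)^ε) ≠ 0 := by
    apply pow_ne_zero; norm_num
  have hSne0 : (∏ i ∈ S, (X - C (uu i))) ≠ 0 :=
    Finset.prod_ne_zero_iff.mpr (fun i _ => Polynomial.X_sub_C_ne_zero _)
  have hKne0 : (∏ k ∈ K, (X - C (y k))) ≠ 0 :=
    Finset.prod_ne_zero_iff.mpr (fun i _ => Polynomial.X_sub_C_ne_zero _)
  have hdeg : q.natDegree ≤ 2*l := by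
    rw [hq, Polynomial.natDegree_C_mul hCne, Polynomial.natDegree_mul hSne0 hKne0,
      hprodS, hprodK]
    have h1 : T.card = n - S.card := by rw [hTdef, Finset.card_sdiff_of_subset hSsub, Finset.card_range]
    have h2 : S.card ≤ n := by
      have := Finset.card_le_card hSsub; rwa [Finset.card_range] at this
    omega
  -- eval
  have heval : ∀ t : ℝ, q.eval t
      = (-1:ℝ)^ε * ((∏ i ∈ S, (t - uu i)) * (∏ k ∈ K, (t - y k))) := by
    intro t
    rw [hq]
    simp [Polynomial.eval_prod]
  have hzero : ∀ i ∈ S, q.eval (uu i) = 0 := by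
    intro i hi
    rw [heval]
    have : (∏ j ∈ S, (uu i - uu j)) = 0 := Finset.prod_eq_zero hi (by ring)
    rw [this]; ring
  have hpos : ∀ j, j < n → j ∉ S → 0 < q.eval (uu j) := by
    intro j hjn hjS
    have hjT : j ∈ T := (hmemT j).mpr ⟨hjn, hjS⟩
    have hyne : ∀ k ∈ K, uu j ≠ y k := by
      intro k hk
      rcases Nat.lt_or_ge j k with h'|h'
      · exact ne_of_lt ((hcmp j k hjn hk).mpr h')
      · have h1 : uu k ≤ uu j := by
          rcases eq_or_lt_of_le h' with h''|h''
          · rw [← h'']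
          · exact le_of_lt (hmono k j h'' hjn)
        have := (havg k hk).2
        intro heq
        rw [heq] at h1
        linarith
    obtain ⟨r1, hr1, e1⟩ := prod_sign S (fun i => uu j - uu i)
      (fun i hi => sub_ne_zero.mpr (huinj j i hjn (hSn i hi) (fun h => hjS (h ▸ hi))))
    obtain ⟨r2, hr2, e2⟩ := prod_sign K (fun k => uu j - y k)
      (fun k hk => sub_ne_zero.mpr (hyne k hk))
    have hfiltS : S.filter (fun i => uu j - uu i < 0) = S.filter (fun i => j < i) := by
      apply Finset.filter_congr
      intro i hi
      simp only [sub_neg, eq_iff_iff]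
      constructor
      · intro h
        by_contra hc
        push_neg at hc
        rcases eq_or_lt_of_le hc with h'|h'
        · exact hjS (h' ▸ hi)
        · exact absurd h (not_lt.mpr (le_of_lt (hmono i j h' hjn)))
      · intro h
        exact hmono j i h (hSn i hi)
    have hfiltK : K.filter (fun k => uu j - y k < 0) = K.filter (fun k => j < k) := by
      apply Finset.filter_congr
      intro k hk
      simp only [sub_neg, eq_iff_iff]
      exact hcmp j k hjn hk
    have hcard2 : ((S.filter (fun i => j < i)).card + (K.filter (fun k => j < k)).card) % 2
        = ε := by
      have := hpar j hjT
      rwa [hSrec] at this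
    rw [heval, e1, e2, hfiltS, hfiltK]
    set a1 := (S.filter (fun i => j < i)).card
    set a2 := (K.filter (fun k => j < k)).card
    have heq2 : (-1:ℝ)^ε * (((-1:ℝ)^a1 * r1) * ((-1:ℝ)^a2 * r2))
        = (-1:ℝ)^(ε+(a1+a2)) * (r1*r2) := by
      rw [pow_add, pow_add]
      ring
    rw [heq2]
    have heven : Even (ε+(a1+a2)) := by
      rw [Nat.even_iff]
      omega
    rw [heven.neg_one_pow, one_mul]
    exact mul_pos hr1 hr2
  exact face_of_poly hl hn uu hmono q hdeg S hSn hSne hzero hpos ⟨a, han, haS⟩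

lemma dvd_prod_roots (m : ℕ) (v : ℕ → ℝ) (hv : ∀ i j, i < j → j < m → v i ≠ v j)
    (q : ℝ[X]) (h : ∀ j, j < m → q.eval (v j) = 0) :
    (∏ j ∈ Finset.range m, (X - C (v j))) ∣ q := by
  induction m generalizing q with
  | zero => simp
  | succ m IH =>
    have hroot : (X - C (v m)) ∣ q := (Polynomial.dvd_iff_isRoot).mpr (h m (Nat.lt_succ_self m))
    obtain ⟨q', hq'⟩ := hroot
    have hq'root : ∀ j, j < m → q'.eval (v j) = 0 := by
      intro j hj
      have h0 := h j (Nat.lt_succ_of_lt hj)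
      rw [hq'] at h0
      simp only [Polynomial.eval_mul, Polynomial.eval_sub, Polynomial.eval_X,
        Polynomial.eval_C] at h0
      rcases mul_eq_zero.mp h0 with h'|h'
      · exact absurd (sub_eq_zero.mp h') (hv j m hj (Nat.lt_succ_self m))
      · exact h'
    obtain ⟨r, hr⟩ := IH (fun i j hij hj => hv i j hij (Nat.lt_succ_of_lt hj)) q' hq'root
    refine ⟨r, ?_⟩
    rw [Finset.prod_range_succ, hq', hr]
    ring

lemma no_alt {l : ℕ} (hl : 1 ≤ l) (e o : ℕ → ℝ)
    (h1 : ∀ j, j ≤ l → e j < o j) (h2 : ∀ j, j < l → o j < e (j+1))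
    (q : ℝ[X]) (hdeg : q.natDegree ≤ 2*l)
    (h0 : ∀ j, j ≤ l → q.eval (e j) = 0) (hp : ∀ j, j ≤ l → 0 < q.eval (o j)) : False := by
  classical
  have hestep : ∀ j, j < l → e j < e (j+1) := fun j hj =>
    lt_trans (h1 j (le_of_lt hj)) (h2 j hj)
  have hemono : ∀ i j, i < j → j ≤ l → e i < e j := by
    intro i j hij hjl
    induction j with
    | zero => omega
    | succ j IH =>
      rcases Nat.lt_or_ge i j with h|h
      · exact lt_trans (IH h (by omega)) (hestep j (by omega))
      · have : i = j := by omega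
        rw [this]
        exact hestep j (by omega)
  have hoe : ∀ j j', j < j' → j' ≤ l → o j < e j' := by
    intro j j' hjj' hj'l
    rcases Nat.lt_or_ge (j+1) j' with h|h
    · exact lt_trans (h2 j (by omega)) (hemono (j+1) j' h hj'l)
    · have : j' = j + 1 := by omega
      rw [this]
      exact h2 j (by omega)
  have homono : ∀ i j, i < j → j ≤ l → o i < o j := by
    intro i j hij hjl
    exact lt_trans (hoe i j hij hjl) (h1 j hjl)
  have hqne : q ≠ 0 := by
    intro h
    have := hp 0 (by omega)
    rw [h] at this
    simp at this
  set P := ∏ j ∈ Finset.range (l+1), (X - C (e j)) with hPdef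
  have hPdvd : P ∣ q := dvd_prod_roots (l+1) e
    (fun i j hij hj => ne_of_lt (hemono i j hij (by omega)))
    q (fun j hj => h0 j (by omega))
  obtain ⟨r, hqPr⟩ := hPdvd
  have hPne : P ≠ 0 := Finset.prod_ne_zero_iff.mpr (fun i _ => Polynomial.X_sub_C_ne_zero _)
  have hrne : r ≠ 0 := by
    intro h
    rw [hqPr, h, mul_zero] at hqne
    exact hqne rfl
  have hPdeg : P.natDegree = l + 1 := by
    rw [hPdef, Polynomial.natDegree_prod _ _ (fun i _ => Polynomial.X_sub_C_ne_zero _)]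
    simp [Polynomial.natDegree_X_sub_C]
  have hrdeg : r.natDegree < l := by
    have := Polynomial.natDegree_mul hPne hrne
    rw [← hqPr, hPdeg] at this
    omega
  -- sign of P at o j
  have hPsign : ∀ j, j ≤ l → ∃ ρ : ℝ, 0 < ρ ∧ P.eval (o j) = (-1:ℝ)^(l-j) * ρ := by
    intro j hj
    have hne : ∀ j' ∈ Finset.range (l+1), o j - e j' ≠ 0 := by
      intro j' hj'
      rw [Finset.mem_range] at hj'
      rcases Nat.lt_or_ge j j' with h|h
      · exact sub_ne_zero.mpr (ne_of_lt (hoe j j' h (by omega)))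
      · have : e j' ≤ e j := by
          rcases eq_or_lt_of_le h with h'|h'
          · rw [h']
          · exact le_of_lt (hemono j' j h' hj)
        have := h1 j hj
        intro hc
        have : o j = e j' := sub_eq_zero.mp hc
        linarith
    obtain ⟨ρ, hρ, hEq⟩ := prod_sign (Finset.range (l+1)) (fun j' => o j - e j') hne
    refine ⟨ρ, hρ, ?_⟩
    have hPeval : P.eval (o j) = ∏ j' ∈ Finset.range (l+1), (o j - e j') := by
      rw [hPdef]
      simp [Polynomial.eval_prod]
    have hfilt : (Finset.range (l+1)).filter (fun j' => o j - e j' < 0)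
        = Finset.Ico (j+1) (l+1) := by
      ext j'
      simp only [Finset.mem_filter, Finset.mem_range, Finset.mem_Ico, sub_neg]
      constructor
      · rintro ⟨hj', hlt⟩
        refine ⟨?_, hj'⟩
        by_contra hc
        push_neg at hc
        have : e j' ≤ e j := by
          rcases Nat.lt_or_ge j' j with h|h
          · exact le_of_lt (hemono j' j h hj)
          · have : j' = j := by omega
            rw [this]
        have := h1 j hj
        linarith
      · rintro ⟨hjj', hj'⟩
        exact ⟨hj', hoe j j' (by omega) (by omega)⟩
    rw [hPeval, hEq, hfilt, Nat.card_Ico]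
    congr 2
    omega
  have hsign : ∀ j, j ≤ l → 0 < (-1:ℝ)^(l-j) * r.eval (o j) := by
    intro j hj
    obtain ⟨ρ, hρ, hEq⟩ := hPsign j hj
    have hq0 : 0 < P.eval (o j) * r.eval (o j) := by
      have := hp j hj
      rwa [hqPr, Polynomial.eval_mul] at this
    rw [hEq] at hq0
    rcases Nat.even_or_odd (l-j) with hpar|hpar
    · rw [hpar.neg_one_pow] at hq0 ⊢
      nlinarith
    · rw [hpar.neg_one_pow] at hq0 ⊢
      nlinarith
  have hroots : ∀ j : Fin l, ∃ x, o j < x ∧ x < o ((j:ℕ)+1) ∧ r.eval x = 0 := by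
    intro ⟨j, hj⟩
    simp only
    have s1 := hsign j (by omega)
    have s2 := hsign (j+1) (by omega)
    have hlj : l - (j+1) = l - j - 1 := by omega
    rw [hlj] at s2
    have hprodneg : r.eval (o j) * r.eval (o (j+1)) < 0 := by
      have hmul := mul_pos s1 s2
      have hodd : Odd ((l-j) + (l-j-1)) := by
        rw [Nat.odd_iff]
        omega
      have : ((-1:ℝ)^(l-j) * r.eval (o j)) * ((-1:ℝ)^(l-j-1) * r.eval (o (j+1)))
          = (-1:ℝ)^((l-j)+(l-j-1)) * (r.eval (o j) * r.eval (o (j+1))) := by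
        rw [pow_add]
        ring
      rw [this, hodd.neg_one_pow] at hmul
      linarith
    have hoj : o j < o (j+1) := homono j (j+1) (by omega) (by omega)
    have hcont : ContinuousOn (fun x => r.eval x) (Set.Icc (o j) (o (j+1))) :=
      (Polynomial.continuous r).continuousOn
    rcases lt_or_ge (r.eval (o j)) 0 with hneg|hpos2
    · have hpos3 : 0 < r.eval (o (j+1)) := by nlinarith
      have := intermediate_value_Ioo (le_of_lt hoj) hcont
      have h0mem : (0:ℝ) ∈ Set.Ioo (r.eval (o j)) (r.eval (o (j+1))) := ⟨hneg, hpos3⟩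
      obtain ⟨x, hx, hx0⟩ := this h0mem
      exact ⟨x, hx.1, hx.2, hx0⟩
    · have hpos1 : 0 < r.eval (o j) := by
        rcases eq_or_lt_of_le hpos2 with h|h
        · exfalso; rw [← h] at hprodneg; simp at hprodneg
        · exact h
      have hneg2 : r.eval (o (j+1)) < 0 := by nlinarith
      have := intermediate_value_Ioo' (le_of_lt hoj) hcont
      have h0mem : (0:ℝ) ∈ Set.Ioo (r.eval (o (j+1))) (r.eval (o j)) := ⟨hneg2, hpos1⟩
      obtain ⟨x, hx, hx0⟩ := this h0mem
      exact ⟨x, hx.1, hx.2, hx0⟩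
  let f : Fin l → ℝ := fun j => (hroots j).choose
  have hf1 : ∀ j : Fin l, o j < f j := fun j => (hroots j).choose_spec.1
  have hf2 : ∀ j : Fin l, f j < o ((j:ℕ)+1) := fun j => (hroots j).choose_spec.2.1
  have hf0 : ∀ j : Fin l, r.eval (f j) = 0 := fun j => (hroots j).choose_spec.2.2
  have hfmono : ∀ i j : Fin l, (i:ℕ) < (j:ℕ) → f i < f j := by
    intro i j h
    calc f i < o ((i:ℕ)+1) := hf2 i
      _ ≤ o (j:ℕ) := by
          rcases eq_or_lt_of_le (Nat.succ_le_of_lt h) with h'|h'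
          · exact le_of_eq (congrArg o h')
          · exact le_of_lt (homono _ _ h' (le_of_lt j.isLt))
      _ < f j := hf1 j
  have hfinj : Function.Injective f := by
    intro i j hij
    rcases Nat.lt_trichotomy (i:ℕ) (j:ℕ) with h|h|h
    · exact absurd hij (ne_of_lt (hfmono i j h))
    · exact Fin.ext h
    · exact absurd hij.symm (ne_of_lt (hfmono j i h))
  have := Polynomial.eq_zero_of_natDegree_lt_card_of_eval_eq_zero r hfinj hf0
    (by rwa [Fintype.card_fin])
  exact hrne this

lemma moment_indep {l : ℕ} (hl : 1 ≤ l) (p : Fin (l+1) → ℝ) (z : ℝ)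
    (hpinj : Function.Injective p) (hz : ∀ j, p j ≠ z) :
    momentCurve (2*l) z ∉ convexHull ℝ (Set.range (fun j => momentCurve (2*l) (p j))) := by
  classical
  intro hmem
  have hlpos : 0 < 2*l := by omega
  have hinj : Set.InjOn (fun j => momentCurve (2*l) (p j)) ↑(Finset.univ : Finset (Fin (l+1))) :=
    fun i _ j _ h => hpinj (momentCurve_inj hlpos h)
  rw [← Set.image_univ, ← Finset.coe_univ, mem_hull_image_iff _ _ hinj] at hmem
  obtain ⟨w, hw0, hw1, hwx⟩ := hmem
  set s : Fin (l+2) → ℝ := Fin.snoc p z with hsdef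
  set lv : Fin (l+2) → ℝ := Fin.snoc w (-1) with hlvdef
  have hsinj : Function.Injective s := by
    intro i j h
    induction i using Fin.lastCases with
    | last =>
      induction j using Fin.lastCases with
      | last => rfl
      | cast j =>
        rw [hsdef] at h
        simp only [Fin.snoc_last, Fin.snoc_castSucc] at h
        exact absurd h.symm (hz j)
    | cast i =>
      induction j using Fin.lastCases with
      | last =>
        rw [hsdef] at h
        simp only [Fin.snoc_last, Fin.snoc_castSucc] at h
        exact absurd h (hz i)
      | cast j =>
        rw [hsdef] at h
        simp only [Fin.snoc_castSucc] at h
        rw [hpinj h]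
  have key : ∀ k : Fin (l+2), ∑ j, (lv j) * (s j)^(k:ℕ) = 0 := by
    intro k
    rw [Fin.sum_univ_castSucc]
    simp only [hsdef, hlvdef, Fin.snoc_castSucc, Fin.snoc_last]
    rcases Nat.eq_zero_or_pos (k:ℕ) with hk|hk
    · rw [hk]
      simp only [pow_zero, mul_one]
      rw [hw1]
      ring
    · have hklt : (k:ℕ) - 1 < 2*l := by
        have := k.isLt
        omega
      have h1 : ∑ j, w j * (p j)^((k:ℕ)) = z^(k:ℕ) := by
        have hcoord : (∑ j, w j • momentCurve (2*l) (p j)) ⟨(k:ℕ)-1, hklt⟩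
            = momentCurve (2*l) z ⟨(k:ℕ)-1, hklt⟩ := by rw [hwx]
        rw [euc_sum_apply] at hcoord
        have he : ∀ j, (w j • momentCurve (2*l) (p j)) (⟨(k:ℕ)-1, hklt⟩ : Fin (2*l))
            = w j * (p j)^((k:ℕ)) := by
          intro j
          have h2 : ((k:ℕ)-1) + 1 = (k:ℕ) := by omega
          show w j * (p j)^(((k:ℕ)-1)+1) = _
          rw [h2]
        rw [Finset.sum_congr rfl (fun j _ => he j)] at hcoord
        have h3 : momentCurve (2*l) z ⟨(k:ℕ)-1, hklt⟩ = z ^ (k:ℕ) := by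
          show z ^ (((k:ℕ)-1)+1) = _
          congr 1
          omega
        rw [h3] at hcoord
        exact hcoord
      rw [h1]
      ring
  have hvdm : Matrix.vecMul lv (Matrix.vandermonde s) = 0 := by
    funext k
    have := key k
    simp only [Matrix.vecMul, dotProduct, Matrix.vandermonde, Matrix.of_apply, Pi.zero_apply]
    convert this using 2
  have hdet : (Matrix.vandermonde s).det ≠ 0 := by
    rw [Matrix.det_vandermonde]
    apply Finset.prod_ne_zero_iff.mpr
    intro i _
    apply Finset.prod_ne_zero_iff.mpr
    intro j hj
    rw [Finset.mem_Ioi] at hj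
    exact sub_ne_zero.mpr (fun h => (ne_of_lt hj) (hsinj h.symm))
  have hzero := Matrix.eq_zero_of_vecMul_eq_zero hdet hvdm
  have := congrFun hzero (Fin.last (l+1))
  rw [hlvdef] at this
  simp only [Fin.snoc_last, Pi.zero_apply] at this
  norm_num at this

lemma euc_decomp {N : ℕ} (x : Euc N) : x = ∑ i, x i • (EuclideanSpace.single i (1:ℝ)) := by
  ext j
  rw [euc_sum_apply]
  have : ∀ i : Fin N, (x i • EuclideanSpace.single i (1:ℝ)) j
      = x i * (EuclideanSpace.single i (1:ℝ)) j := fun i => rfl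
  rw [Finset.sum_congr rfl (fun i _ => this i)]
  simp [EuclideanSpace.single_apply, mul_ite]

lemma notface_par {l n : ℕ} (hl : 1 ≤ l) (hn : n = 2*l+2) (uu : ℕ → ℝ)
    (hmono : ∀ i j : ℕ, i < j → j < n → uu i < uu j) (par : ℕ) (hpar : par = 0 ∨ par = 1) :
    ¬ IsProperFace (convexHull ℝ ((fun i => momentCurve (2*l) (uu i)) '' (Set.Iio n)))
      (convexHull ℝ ((fun i => momentCurve (2*l) (uu i)) '' {i | i < n ∧ i % 2 = par})) := by
  classical
  rintro ⟨L, c, hL0, hle, -, hF⟩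
  set g : ℕ → Euc (2*l) := fun i => momentCurve (2*l) (uu i) with hg
  have huinj : ∀ i j : ℕ, i < n → j < n → i ≠ j → uu i ≠ uu j := by
    intro i j hi hj hij
    rcases lt_trichotomy i j with h|h|h
    · exact ne_of_lt (hmono i j h hj)
    · exact absurd h hij
    · exact (ne_of_lt (hmono j i h hi)).symm
  -- the polynomial attached to L
  set q : ℝ[X] := C c - ∑ i : Fin (2*l), C (L (EuclideanSpace.single i (1:ℝ))) * X^((i:ℕ)+1)
    with hq
  have heval : ∀ t : ℝ, q.eval t = c - L (momentCurve (2*l) t) := by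
    intro t
    have hdecomp : L (momentCurve (2*l) t)
        = ∑ i : Fin (2*l), (momentCurve (2*l) t i) * L (EuclideanSpace.single i (1:ℝ)) := by
      conv_lhs => rw [euc_decomp (momentCurve (2*l) t)]
      rw [map_sum]
      apply Finset.sum_congr rfl
      intro i _
      rw [map_smul, smul_eq_mul]
    rw [hq]
    simp only [Polynomial.eval_sub, Polynomial.eval_C, Polynomial.eval_finset_sum,
      Polynomial.eval_mul, Polynomial.eval_pow, Polynomial.eval_X]
    rw [hdecomp]
    congr 1
    apply Finset.sum_congr rfl
    intro i _
    have : momentCurve (2*l) t i = t ^ ((i:ℕ)+1) := rfl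
    rw [this]
    ring
  have hdeg : q.natDegree ≤ 2*l := by
    rw [hq]
    apply le_trans (Polynomial.natDegree_sub_le _ _)
    rw [max_le_iff]
    constructor
    · simp
    · apply Polynomial.natDegree_sum_le_of_forall_le
      intro i _
      apply le_trans (Polynomial.natDegree_C_mul_le _ _)
      rw [Polynomial.natDegree_X_pow]
      omega
  -- values
  have hmemP : ∀ i, i < n → g i ∈ convexHull ℝ (g '' (Set.Iio n)) :=
    fun i hi => subset_convexHull ℝ _ ⟨i, hi, rfl⟩
  have hzeroval : ∀ i, i < n → i % 2 = par → q.eval (uu i) = 0 := by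
    intro i hi hip
    have hgF : g i ∈ {x | x ∈ convexHull ℝ (g '' (Set.Iio n)) ∧ L x = c} := by
      rw [← hF]
      exact subset_convexHull ℝ _ ⟨i, ⟨hi, hip⟩, rfl⟩
    rw [heval, hgF.2]
    ring
  -- the even/odd points as a Fin (l+1) family
  have himg : (g '' {i | i < n ∧ i % 2 = par})
      = Set.range (fun j : Fin (l+1) => momentCurve (2*l) (uu (2*(j:ℕ)+par))) := by
    ext x
    constructor
    · rintro ⟨i, ⟨hin, hipar⟩, rfl⟩
      have : ∃ k, k ≤ l ∧ i = 2*k+par :=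
        ⟨i/2, by rcases hpar with rfl|rfl <;> omega, by rcases hpar with rfl|rfl <;> omega⟩
      obtain ⟨k, hk, rfl⟩ := this
      exact ⟨⟨k, by omega⟩, rfl⟩
    · rintro ⟨j, rfl⟩
      exact ⟨2*(j:ℕ)+par, ⟨by have := j.isLt; omega, by omega⟩, rfl⟩
  have hposval : ∀ i, i < n → ¬ i % 2 = par → 0 < q.eval (uu i) := by
    intro i hi hip
    have hle2 : L (g i) ≤ c := hle _ (hmemP i hi)
    rcases eq_or_lt_of_le hle2 with heq|hlt
    · exfalso
      have hgF : g i ∈ convexHull ℝ (g '' {i | i < n ∧ i % 2 = par}) := by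
        rw [hF]
        exact ⟨hmemP i hi, heq⟩
      rw [himg] at hgF
      refine moment_indep hl (fun j : Fin (l+1) => uu (2*(j:ℕ)+par)) (uu i) ?_ ?_ hgF
      · intro j1 j2 h
        have h2 : (2*(j1:ℕ)+par) = (2*(j2:ℕ)+par) := by
          by_contra hc
          exact huinj _ _ (by have := j1.isLt; omega) (by have := j2.isLt; omega) hc h
        ext
        omega
      · intro j
        apply huinj _ _ (by have := j.isLt; omega) hi
        omega
    · rw [heval]
      linarith
  -- apply no_alt
  rcases hpar with rfl|rfl
  · apply no_alt hl (fun j => uu (2*j)) (fun j => uu (2*j+1))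
      (fun j hj => hmono _ _ (by omega) (by omega))
      (fun j hj => hmono _ _ (by omega) (by omega)) q hdeg
      (fun j hj => hzeroval _ (by omega) (by omega))
      (fun j hj => hposval _ (by omega) (by omega))
  · apply no_alt hl (fun j => -uu (2*(l-j)+1)) (fun j => -uu (2*(l-j)))
      (fun j hj => by
        show -uu (2*(l-j)+1) < -uu (2*(l-j))
        have := hmono (2*(l-j)) (2*(l-j)+1) (by omega) (by omega)
        linarith)
      (fun j hj => by
        show -uu (2*(l-j)) < -uu (2*(l-(j+1))+1)
        have h2 : 2*(l-(j+1))+1 = 2*(l-j)-1 := by omega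
        have := hmono (2*(l-j)-1) (2*(l-j)) (by omega) (by omega)
        rw [h2]
        linarith)
      (q.comp (-X))
      (by rw [Polynomial.natDegree_comp]
          simp only [Polynomial.natDegree_neg, Polynomial.natDegree_X, mul_one]
          exact hdeg)
      (fun j hj => by
        rw [Polynomial.eval_comp]
        simp only [Polynomial.eval_neg, Polynomial.eval_X, neg_neg]
        exact hzeroval _ (by omega) (by omega))
      (fun j hj => by
        rw [Polynomial.eval_comp]
        simp only [Polynomial.eval_neg, Polynomial.eval_X, neg_neg]
        exact hposval _ (by omega) (by omega))

end AuxMissing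

/-- A cyclic `2ℓ`-polytope with `2ℓ+2` vertices has exactly two missing
faces; they are disjoint and each has exactly `ℓ+1` vertices. -/
theorem statement_14 {l : ℕ}
    (C : Set (Euc (2 * l))) (hC : IsCyclicPolytope (2 * l) (2 * l + 2) C) :
    ∃ M₁ M₂ : Set (Euc (2 * l)), M₁ ≠ M₂ ∧
      {M | IsMissingFace C M} = {M₁, M₂} ∧
      M₁ ∩ M₂ = ∅ ∧ M₁.ncard = l + 1 ∧ M₂.ncard = l + 1 := by
  classical
  obtain ⟨t, htinj, hCdef, hncard⟩ := hC
  -- rule out l = 0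
  rcases Nat.eq_zero_or_pos l with rfl|hl
  · exfalso
    obtain ⟨x, y, hxy, -⟩ := Set.ncard_eq_two.mp hncard
    apply hxy
    ext j
    exact absurd j.isLt (by omega)
  obtain ⟨n, hn⟩ : ∃ n, n = 2*l+2 := ⟨2*l+2, rfl⟩
  -- sorted vertex parameters
  set Tf := Finset.image t Finset.univ with hTf
  have hTfcard : Tf.card = n := by
    rw [hTf, Finset.card_image_of_injective _ htinj, Finset.card_univ, Fintype.card_fin, hn]
  set iso := Tf.orderIsoOfFin hTfcard with hiso
  set u : Fin n → ℝ := fun i => (iso i : ℝ) with hu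
  have hustrict : StrictMono u := fun i j h => by
    have := iso.strictMono h
    exact this
  have humem : ∀ i, u i ∈ Tf := fun i => (iso i).2
  have hurange : ∀ x ∈ Tf, ∃ i, u i = x := by
    intro x hx
    obtain ⟨i, hi⟩ := iso.surjective ⟨x, hx⟩
    exact ⟨i, by rw [hu]; simp only [hi]⟩
  set uu : ℕ → ℝ := fun i => if h : i < n then u ⟨i, h⟩ else 0 with huu
  have huuval : ∀ (i : ℕ) (h : i < n), uu i = u ⟨i, h⟩ := by
    intro i h
    rw [huu]
    simp [h]
  have hmono : ∀ i j : ℕ, i < j → j < n → uu i < uu j := by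
    intro i j hij hj
    rw [huuval i (by omega), huuval j hj]
    exact hustrict (by simpa using hij)
  set g : ℕ → Euc (2*l) := fun i => momentCurve (2*l) (uu i) with hg
  have hCeq : C = convexHull ℝ (g '' Set.Iio n) := by
    rw [hCdef]
    congr 1
    ext x
    constructor
    · rintro ⟨i, rfl⟩
      have : t i ∈ Tf := by rw [hTf]; exact Finset.mem_image_of_mem t (Finset.mem_univ i)
      obtain ⟨j, hj⟩ := hurange (t i) this
      exact ⟨(j:ℕ), j.isLt, by rw [hg]; simp only; rw [huuval _ j.isLt, Fin.eta, hj]⟩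
    · rintro ⟨i, hi, rfl⟩
      have : uu i ∈ Tf := by rw [huuval i hi]; exact humem _
      rw [hTf] at this
      obtain ⟨k, -, hk⟩ := Finset.mem_image.mp this
      exact ⟨k, by rw [hg]; simp only [hk]⟩
  have huinj : ∀ i j : ℕ, i < n → j < n → i ≠ j → uu i ≠ uu j := by
    intro i j hi hj hij
    rcases lt_trichotomy i j with h|h|h
    · exact ne_of_lt (hmono i j h hj)
    · exact absurd h hij
    · exact (ne_of_lt (hmono j i h hi)).symm
  have hginj : ∀ i j : ℕ, i < n → j < n → g i = g j → i = j := by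
    intro i j hi hj h
    by_contra hij
    exact huinj i j hi hj hij (momentCurve_inj (by omega) h)
  -- vertices
  have hVfin : (g '' Set.Iio n).Finite := by
    rw [← Finset.coe_range n]
    exact (Finset.range n).finite_toSet.image g
  have hvertsub : verts C ⊆ g '' Set.Iio n := by
    rw [hCeq]
    exact extremePoints_convexHull_subset
  have hvertseq : verts C = g '' Set.Iio n := by
    apply Set.eq_of_subset_of_ncard_le hvertsub _ hVfin
    have h1 : (g '' Set.Iio n).ncard ≤ n := by
      rw [← Finset.coe_range n]
      apply le_trans (Set.ncard_image_le (Finset.range n).finite_toSet)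
      rw [Set.ncard_coe_finset, Finset.card_range]
    rw [hncard, ← hn]
    exact h1
  -- the two index sets
  set E : Finset ℕ := (Finset.range (l+1)).image (fun j => 2*j) with hE
  set O : Finset ℕ := (Finset.range (l+1)).image (fun j => 2*j+1) with hO
  have hmemE : ∀ i, i ∈ E ↔ i < n ∧ i % 2 = 0 := by
    intro i
    rw [hE, Finset.mem_image]
    constructor
    · rintro ⟨j, hj, rfl⟩
      rw [Finset.mem_range] at hj
      omega
    · rintro ⟨hin, hpar⟩
      exact ⟨i/2, Finset.mem_range.mpr (by omega), by omega⟩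
  have hmemO : ∀ i, i ∈ O ↔ i < n ∧ i % 2 = 1 := by
    intro i
    rw [hO, Finset.mem_image]
    constructor
    · rintro ⟨j, hj, rfl⟩
      rw [Finset.mem_range] at hj
      omega
    · rintro ⟨hin, hpar⟩
      exact ⟨i/2, Finset.mem_range.mpr (by omega), by omega⟩
  have hEn : ∀ i ∈ E, i < n := fun i hi => ((hmemE i).mp hi).1
  have hOn : ∀ i ∈ O, i < n := fun i hi => ((hmemO i).mp hi).1
  set M₁ : Set (Euc (2*l)) := g '' ↑E with hM₁
  set M₂ : Set (Euc (2*l)) := g '' ↑O with hM₂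
  have hEcoe : (↑E : Set ℕ) = {i | i < n ∧ i % 2 = 0} := by
    ext i; rw [Finset.mem_coe, hmemE]; rfl
  have hOcoe : (↑O : Set ℕ) = {i | i < n ∧ i % 2 = 1} := by
    ext i; rw [Finset.mem_coe, hmemO]; rfl
  -- non-faces
  have hnotface1 : ¬ IsProperFace C (convexHull ℝ M₁) := by
    rw [hCeq, hM₁, hEcoe]
    exact notface_par hl hn uu hmono 0 (Or.inl rfl)
  have hnotface2 : ¬ IsProperFace C (convexHull ℝ M₂) := by
    rw [hCeq, hM₂, hOcoe]
    exact notface_par hl hn uu hmono 1 (Or.inr rfl)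
  -- faces
  have hface : ∀ S : Finset ℕ, (∀ i ∈ S, i < n) → S.Nonempty →
      (∃ a, a < n ∧ a % 2 = 0 ∧ a ∉ S) → (∃ b, b < n ∧ b % 2 = 1 ∧ b ∉ S) →
      IsProperFace C (convexHull ℝ (g '' ↑S)) := by
    intro S h1 h2 h3 h4
    rw [hCeq]
    exact faceA hl hn uu hmono S h1 h2 h3 h4
  -- generic: subsets of verts are images of index finsets
  have hsub_repr : ∀ (A : Set (Euc (2*l))) (S : Finset ℕ), (∀ i ∈ S, i < n) →
      A ⊆ g '' ↑S → A = g '' ↑((S.filter (fun i => g i ∈ A))) := by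
    intro A S hSn hAsub
    apply Set.Subset.antisymm
    · intro x hx
      obtain ⟨i, hi, rfl⟩ := hAsub hx
      exact ⟨i, Finset.mem_coe.mpr (Finset.mem_filter.mpr ⟨hi, hx⟩), rfl⟩
    · rintro x ⟨i, hi, rfl⟩
      exact (Finset.mem_filter.mp (Finset.mem_coe.mp hi)).2
  have hvertsempty : verts (∅ : Set (Euc (2*l))) = ∅ := extremePoints_empty
  -- M₁, M₂ are missing faces
  have hmiss : ∀ (W : Finset ℕ), (∀ i ∈ W, i ∈ E ∨ i ∈ O) → ((∀ i ∈ W, i ∈ E) ∨ (∀ i ∈ W, i ∈ O)) →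
      True := fun _ _ _ => trivial
  have hg0M₁ : g 0 ∈ M₁ := ⟨0, Finset.mem_coe.mpr ((hmemE 0).mpr ⟨by omega, by omega⟩), rfl⟩
  have hg1M₂ : g 1 ∈ M₂ := ⟨1, Finset.mem_coe.mpr ((hmemO 1).mpr ⟨by omega, by omega⟩), rfl⟩
  have hmissing1 : IsMissingFace C M₁ := by
    refine ⟨?_, ?_, ?_⟩
    · rw [hvertsempty, Set.diff_empty, hvertseq, hM₁]
      apply Set.image_mono
      rw [hEcoe]
      intro i hi
      exact hi.1
    · rw [Set.union_empty]
      rintro (h|h)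
      · rw [convexHull_eq_empty] at h
        rw [h] at hg0M₁
        exact hg0M₁
      · exact hnotface1 h
    · intro A' hA'
      rw [Set.union_empty]
      have hA'sub : A' ⊆ M₁ := subset_of_ssubset hA'
      set S' := E.filter (fun i => g i ∈ A') with hS'
      have hA'eq : A' = g '' ↑S' := hsub_repr A' E hEn hA'sub
      by_cases hS'ne : S'.Nonempty
      · right
        rw [hA'eq]
        apply hface S' (fun i hi => hEn i (Finset.filter_subset _ _ hi)) hS'ne
        · -- a missing even index
          obtain ⟨x, hxM, hxA⟩ := Set.exists_of_ssubset hA'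
          obtain ⟨a, haE, rfl⟩ := hxM
          refine ⟨a, hEn a haE, ((hmemE a).mp haE).2, ?_⟩
          intro haS'
          exact hxA ((Finset.mem_filter.mp haS').2)
        · refine ⟨1, by omega, by omega, ?_⟩
          intro h1S'
          have := (hmemE 1).mp (Finset.filter_subset _ _ h1S')
          omega
      · left
        rw [Finset.not_nonempty_iff_eq_empty] at hS'ne
        rw [hA'eq, hS'ne]
        simp [convexHull_empty]
  have hmissing2 : IsMissingFace C M₂ := by
    refine ⟨?_, ?_, ?_⟩
    · rw [hvertsempty, Set.diff_empty, hvertseq, hM₂]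
      apply Set.image_mono
      rw [hOcoe]
      intro i hi
      exact hi.1
    · rw [Set.union_empty]
      rintro (h|h)
      · rw [convexHull_eq_empty] at h
        rw [h] at hg1M₂
        exact hg1M₂
      · exact hnotface2 h
    · intro A' hA'
      rw [Set.union_empty]
      have hA'sub : A' ⊆ M₂ := subset_of_ssubset hA'
      set S' := O.filter (fun i => g i ∈ A') with hS'
      have hA'eq : A' = g '' ↑S' := hsub_repr A' O hOn hA'sub
      by_cases hS'ne : S'.Nonempty
      · right
        rw [hA'eq]
        apply hface S' (fun i hi => hOn i (Finset.filter_subset _ _ hi)) hS'ne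
        · refine ⟨0, by omega, by omega, ?_⟩
          intro h0S'
          have := (hmemO 0).mp (Finset.filter_subset _ _ h0S')
          omega
        · obtain ⟨x, hxM, hxA⟩ := Set.exists_of_ssubset hA'
          obtain ⟨b, hbO, rfl⟩ := hxM
          refine ⟨b, hOn b hbO, ((hmemO b).mp hbO).2, ?_⟩
          intro hbS'
          exact hxA ((Finset.mem_filter.mp hbS').2)
      · left
        rw [Finset.not_nonempty_iff_eq_empty] at hS'ne
        rw [hA'eq, hS'ne]
        simp [convexHull_empty]
  -- classification
  have honly : ∀ M, IsMissingFace C M → M = M₁ ∨ M = M₂ := by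
    intro M hM
    obtain ⟨hMsub, hMnb, hMmin⟩ := hM
    rw [hvertsempty, Set.diff_empty, hvertseq] at hMsub
    rw [Set.union_empty] at hMnb
    have hIio : (Set.Iio n : Set ℕ) = ↑(Finset.range n) := by rw [Finset.coe_range]
    rw [hIio] at hMsub
    set S := (Finset.range n).filter (fun i => g i ∈ M) with hS
    have hMeq : M = g '' ↑S :=
      hsub_repr M (Finset.range n) (fun i hi => Finset.mem_range.mp hi) hMsub
    have hSn : ∀ i ∈ S, i < n := fun i hi =>
      Finset.mem_range.mp (Finset.filter_subset _ _ hi)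
    by_cases hEsub : E ⊆ S
    · left
      by_contra hne
      have hsub1 : M₁ ⊆ M := by
        rw [hM₁, hMeq]
        exact Set.image_mono (by exact_mod_cast hEsub)
      have hss : M₁ ⊂ M := ssubset_of_subset_of_ne hsub1 (fun h => hne h.symm)
      have := hMmin M₁ hss
      rw [Set.union_empty] at this
      rcases this with h|h
      · rw [convexHull_eq_empty] at h
        rw [h] at hg0M₁
        exact hg0M₁
      · exact hnotface1 h
    · by_cases hOsub : O ⊆ S
      · right
        by_contra hne
        have hsub2 : M₂ ⊆ M := by
          rw [hM₂, hMeq]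
          exact Set.image_mono (by exact_mod_cast hOsub)
        have hss : M₂ ⊂ M := ssubset_of_subset_of_ne hsub2 (fun h => hne h.symm)
        have := hMmin M₂ hss
        rw [Set.union_empty] at this
        rcases this with h|h
        · rw [convexHull_eq_empty] at h
          rw [h] at hg1M₂
          exact hg1M₂
        · exact hnotface2 h
      · exfalso
        apply hMnb
        by_cases hSne : S.Nonempty
        · right
          rw [hMeq]
          apply hface S hSn hSne
          · obtain ⟨a, haE, haS⟩ := Finset.not_subset.mp hEsub
            exact ⟨a, hEn a haE, ((hmemE a).mp haE).2, haS⟩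
          · obtain ⟨b, hbO, hbS⟩ := Finset.not_subset.mp hOsub
            exact ⟨b, hOn b hbO, ((hmemO b).mp hbO).2, hbS⟩
        · left
          rw [Finset.not_nonempty_iff_eq_empty] at hSne
          rw [hMeq, hSne]
          simp [convexHull_empty]
  -- disjointness & cardinalities
  have hdisj : M₁ ∩ M₂ = ∅ := by
    ext x
    simp only [Set.mem_inter_iff, Set.mem_empty_iff_false, iff_false]
    rintro ⟨⟨i, hiE, rfl⟩, ⟨j, hjO, hji⟩⟩
    have hiE' := (hmemE i).mp (Finset.mem_coe.mp hiE)
    have hjO' := (hmemO j).mp (Finset.mem_coe.mp hjO)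
    have := hginj j i hjO'.1 hiE'.1 hji
    omega
  have hne12 : M₁ ≠ M₂ := by
    intro h
    have : g 0 ∈ M₁ ∩ M₂ := ⟨hg0M₁, h ▸ hg0M₁⟩
    rw [hdisj] at this
    exact this
  have hinjE : Set.InjOn g ↑E := fun i hi j hj h =>
    hginj i j (hEn i (Finset.mem_coe.mp hi)) (hEn j (Finset.mem_coe.mp hj)) h
  have hinjO : Set.InjOn g ↑O := fun i hi j hj h =>
    hginj i j (hOn i (Finset.mem_coe.mp hi)) (hOn j (Finset.mem_coe.mp hj)) h
  have hdbl : Function.Injective (fun j => 2*j) := fun a b h => by dsimp at h; omega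
  have hdbl1 : Function.Injective (fun j => 2*j+1) := fun a b h => by dsimp at h; omega
  have hcard1 : M₁.ncard = l + 1 := by
    rw [hM₁, Set.ncard_image_of_injOn hinjE, Set.ncard_coe_finset, hE,
      Finset.card_image_of_injective _ hdbl, Finset.card_range]
  have hcard2 : M₂.ncard = l + 1 := by
    rw [hM₂, Set.ncard_image_of_injOn hinjO, Set.ncard_coe_finset, hO,
      Finset.card_image_of_injective _ hdbl1, Finset.card_range]
  refine ⟨M₁, M₂, hne12, ?_, hdisj, hcard1, hcard2⟩
  ext M
  simp only [Set.mem_setOf_eq, Set.mem_insert_iff, Set.mem_singleton_iff]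
  constructor
  · exact honly M
  · rintro (rfl|rfl)
    · exact hmissing1
    · exact hmissing2
end
end
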